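/- arXiv:2312.08433 — 4 statements merged into one kernel-verified Lean document; each statement's English description precedes it below -/
import Mathlib

section
/- Let n ≥ 1 and let k be a natural number. Then the sum of k^{C(G_M)} over all (2n−1)!! perfect matchings M of {1,…,2n} equals k(k+2)(k+4)⋯(k+2n−2), i.e., ∑_{M} k^{C(G_M)} = ∏_{j=0}^{n−1} (k + 2j). -/
open scoped BigOperators

namespace GBS

/-- A perfect matching of `{1,…,2n}`, encoded as a fixed-point-free involution of `Fin (2*n)`:
the pairs of the matching are the orbits `{x, f x}`. -/
abbrev PerfectMatching (n : ℕ) : Type :=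
  {f : Equiv.Perm (Fin (2 * n)) // (∀ x, f (f x) = x) ∧ ∀ x, f x ≠ x}

/-- The graph `G_M` on the `2n` vertices (0-indexed as `Fin (2*n)`): black edges join
`2j` and `2j+1` (i.e. vertices with the same `⌊·/2⌋`, which is the 0-indexed version of the
1-indexed pairs `{2j-1, 2j}`), and red edges join `x` and `f x` for the matching `f`. -/
def matchGraph (n : ℕ) (f : Equiv.Perm (Fin (2 * n))) : SimpleGraph (Fin (2 * n)) where
  Adj u v := u ≠ v ∧ ((u : ℕ) / 2 = (v : ℕ) / 2 ∨ f u = v ∨ f v = u)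
  symm := by
    constructor
    intro u v h
    refine ⟨h.1.symm, ?_⟩
    rcases h.2 with h2 | h2 | h2
    · exact Or.inl h2.symm
    · exact Or.inr (Or.inr h2)
    · exact Or.inr (Or.inl h2)
  loopless := ⟨fun u h => h.1 rfl⟩

lemma matchGraph_adj {m : ℕ} (f : Equiv.Perm (Fin (2*m))) (u v : Fin (2*m)) :
    (matchGraph m f).Adj u v ↔ u ≠ v ∧ ((u : ℕ) / 2 = (v : ℕ) / 2 ∨ f u = v ∨ f v = u) :=
  Iff.rfl

variable {n : ℕ}

def emb (n : ℕ) : Fin (2*n) → Fin (2*(n+1)) := Fin.castLE (by omega)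

@[simp] lemma emb_val (a : Fin (2*n)) : ((emb n a) : ℕ) = a := rfl

lemma emb_inj : Function.Injective (emb n) := Fin.castLE_injective _

lemma emb_lt (a : Fin (2*n)) : ((emb n a) : ℕ) < 2*n := a.isLt

def vA (n : ℕ) : Fin (2*(n+1)) := ⟨2*n, by omega⟩
def vB (n : ℕ) : Fin (2*(n+1)) := ⟨2*n+1, by omega⟩

@[simp] lemma vA_val : ((vA n : Fin (2*(n+1))) : ℕ) = 2*n := rfl
@[simp] lemma vB_val : ((vB n : Fin (2*(n+1))) : ℕ) = 2*n+1 := rfl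

lemma vA_ne_vB : (vA n) ≠ vB n := by
  intro h
  have h1 : (2*n : ℕ) = 2*n+1 := congrArg Fin.val h
  omega

lemma emb_ne_vA (a : Fin (2*n)) : emb n a ≠ vA n := by
  intro h
  have h1 : (a : ℕ) = 2*n := congrArg Fin.val h
  have h2 := a.isLt
  omega

lemma emb_ne_vB (a : Fin (2*n)) : emb n a ≠ vB n := by
  intro h
  have h1 : (a : ℕ) = 2*n+1 := congrArg Fin.val h
  have h2 := a.isLt
  omega

lemma cases3 (x : Fin (2*(n+1))) : (∃ a, x = emb n a) ∨ x = vA n ∨ x = vB n := by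
  rcases Nat.lt_or_ge (x:ℕ) (2*n) with h | h
  · exact Or.inl ⟨⟨x, h⟩, Fin.ext rfl⟩
  · have hx := x.isLt
    rcases Nat.eq_or_lt_of_le h with h2 | h2
    · exact Or.inr (Or.inl (Fin.ext h2.symm))
    · exact Or.inr (Or.inr (Fin.ext (show (x:ℕ) = 2*n+1 by omega)))

/-! ### The two extension maps -/

def g1 (f : Equiv.Perm (Fin (2*n))) : Fin (2*(n+1)) → Fin (2*(n+1)) :=
  fun x => if h : (x:ℕ) < 2*n then emb n (f ⟨x, h⟩)
    else if (x:ℕ) = 2*n then vB n else vA n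

lemma g1_emb (f : Equiv.Perm (Fin (2*n))) (a : Fin (2*n)) :
    g1 f (emb n a) = emb n (f a) := by
  have h : ((emb n a) : ℕ) < 2*n := a.isLt
  simp only [g1, dif_pos h]
  rfl

lemma g1_A (f : Equiv.Perm (Fin (2*n))) : g1 f (vA n) = vB n := by
  simp [g1]

lemma g1_B (f : Equiv.Perm (Fin (2*n))) : g1 f (vB n) = vA n := by
  simp [g1]

lemma g1_invol (f : Equiv.Perm (Fin (2*n))) (hf : ∀ x, f (f x) = x) :
    Function.Involutive (g1 (n:=n) f) := by
  intro x
  rcases cases3 x with ⟨a, rfl⟩ | rfl | rfl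
  · rw [g1_emb, g1_emb, hf]
  · rw [g1_A]; exact g1_B f
  · rw [g1_B]; exact g1_A f

lemma g1_ne (f : Equiv.Perm (Fin (2*n))) (hfp : ∀ x, f x ≠ x) :
    ∀ x, g1 (n:=n) f x ≠ x := by
  intro x
  rcases cases3 x with ⟨a, rfl⟩ | rfl | rfl
  · rw [g1_emb]; exact fun h => hfp a (emb_inj h)
  · rw [g1_A]; exact fun h => vA_ne_vB h.symm
  · rw [g1_B]; exact vA_ne_vB

def Phi1 (f : PerfectMatching n) : PerfectMatching (n+1) :=
  ⟨(g1_invol f.1 f.2.1).toPerm, fun x => g1_invol f.1 f.2.1 x, g1_ne f.1 f.2.2⟩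

@[simp] lemma Phi1_apply (f : PerfectMatching n) (x : Fin (2*(n+1))) :
    (Phi1 f).1 x = g1 f.1 x := rfl

def g2 (f : Equiv.Perm (Fin (2*n))) (u : Fin (2*n)) : Fin (2*(n+1)) → Fin (2*(n+1)) :=
  fun x => if h : (x:ℕ) < 2*n then
      (if (⟨x,h⟩ : Fin (2*n)) = u then vA n
       else if (⟨x,h⟩ : Fin (2*n)) = f u then vB n
       else emb n (f ⟨x,h⟩))
    else if (x:ℕ) = 2*n then emb n u else emb n (f u)

lemma g2_emb_of (f : Equiv.Perm (Fin (2*n))) (u a : Fin (2*n)) (ha : a ≠ u) (ha2 : a ≠ f u) :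
    g2 f u (emb n a) = emb n (f a) := by
  have h : ((emb n a) : ℕ) < 2*n := a.isLt
  have he : (⟨((emb n a) : ℕ), h⟩ : Fin (2*n)) = a := Fin.ext rfl
  simp only [g2, dif_pos h, he, if_neg ha, if_neg ha2]

lemma g2_u (f : Equiv.Perm (Fin (2*n))) (u : Fin (2*n)) : g2 f u (emb n u) = vA n := by
  have h : ((emb n u) : ℕ) < 2*n := u.isLt
  have he : (⟨((emb n u) : ℕ), h⟩ : Fin (2*n)) = u := Fin.ext rfl
  simp only [g2, dif_pos h, he]
  simp

lemma g2_fu (f : Equiv.Perm (Fin (2*n))) (u : Fin (2*n)) (hu : f u ≠ u) :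
    g2 f u (emb n (f u)) = vB n := by
  have h : ((emb n (f u)) : ℕ) < 2*n := (f u).isLt
  have he : (⟨((emb n (f u)) : ℕ), h⟩ : Fin (2*n)) = f u := Fin.ext rfl
  simp only [g2, dif_pos h, he, if_neg hu]
  simp

lemma g2_A (f : Equiv.Perm (Fin (2*n))) (u : Fin (2*n)) : g2 f u (vA n) = emb n u := by
  simp [g2]

lemma g2_B (f : Equiv.Perm (Fin (2*n))) (u : Fin (2*n)) : g2 f u (vB n) = emb n (f u) := by
  simp [g2]

lemma g2_invol (f : Equiv.Perm (Fin (2*n))) (u : Fin (2*n)) (hf : ∀ x, f (f x) = x)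
    (hu : f u ≠ u) : Function.Involutive (g2 (n:=n) f u) := by
  have hinj : Function.Injective f := f.injective
  intro x
  rcases cases3 x with ⟨a, rfl⟩ | rfl | rfl
  · by_cases h1 : a = u
    · subst h1; rw [g2_u, g2_A]
    · by_cases h2 : a = f u
      · subst h2; rw [g2_fu f u hu, g2_B]
      · rw [g2_emb_of f u a h1 h2]
        have hfa1 : f a ≠ u := by
          intro h; apply h2; rw [← h, hf]  -- a = f (f a) ... need care
        have hfa2 : f a ≠ f u := fun h => h1 (hinj h)
        rw [g2_emb_of f u (f a) hfa1 hfa2, hf]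
  · rw [g2_A, g2_u]
  · rw [g2_B, g2_fu f u hu]

lemma g2_ne (f : Equiv.Perm (Fin (2*n))) (u : Fin (2*n)) (hfp : ∀ x, f x ≠ x) :
    ∀ x, g2 (n:=n) f u x ≠ x := by
  intro x
  rcases cases3 x with ⟨a, rfl⟩ | rfl | rfl
  · by_cases h1 : a = u
    · subst h1; rw [g2_u]; exact fun h => emb_ne_vA a h.symm
    · by_cases h2 : a = f u
      · subst h2; rw [g2_fu f u (hfp u)]; exact fun h => emb_ne_vB (f u) h.symm
      · rw [g2_emb_of f u a h1 h2]; exact fun h => hfp a (emb_inj h)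
  · rw [g2_A]; exact emb_ne_vA u
  · rw [g2_B]; exact emb_ne_vB (f u)

def Phi2 (f : PerfectMatching n) (u : Fin (2*n)) : PerfectMatching (n+1) :=
  ⟨(g2_invol f.1 u f.2.1 (f.2.2 u)).toPerm,
   fun x => g2_invol f.1 u f.2.1 (f.2.2 u) x, g2_ne f.1 u f.2.2⟩

@[simp] lemma Phi2_apply (f : PerfectMatching n) (u : Fin (2*n)) (x : Fin (2*(n+1))) :
    (Phi2 f u).1 x = g2 f.1 u x := rfl


/-! ### Component counting -/

open SimpleGraph

lemma big_cases {x : Fin (2*(n+1))} (h : ¬ (x:ℕ) < 2*n) : x = vA n ∨ x = vB n := by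
  rcases cases3 x with ⟨a, rfl⟩ | hx | hx
  · exact absurd a.isLt h
  · exact Or.inl hx
  · exact Or.inr hx

lemma g1_small (f : Equiv.Perm (Fin (2*n))) {x : Fin (2*(n+1))} (h : (x:ℕ) < 2*n) :
    g1 f x = emb n (f ⟨x, h⟩) := dif_pos h

lemma g2_small (f : Equiv.Perm (Fin (2*n))) (u : Fin (2*n)) {x : Fin (2*(n+1))}
    (h : (x:ℕ) < 2*n) :
    g2 f u x = (if (⟨x,h⟩ : Fin (2*n)) = u then vA n
       else if (⟨x,h⟩ : Fin (2*n)) = f u then vB n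
       else emb n (f ⟨x,h⟩)) := dif_pos h

lemma eq_of_reachable {V : Type*} {β : Sort*} {G : SimpleGraph V} (f : V → β)
    (h : ∀ a b, G.Adj a b → f a = f b) {a b : V} (hr : G.Reachable a b) : f a = f b := by
  obtain ⟨w⟩ := hr
  induction w with
  | nil => rfl
  | cons h' p ih => exact (h _ _ h').trans ih

lemma reachable_lift {V W : Type*} {G : SimpleGraph V} {H : SimpleGraph W}
    (m : V → W) (hadj : ∀ a b, G.Adj a b → H.Reachable (m a) (m b)) :
    ∀ {a b : V}, G.Reachable a b → H.Reachable (m a) (m b) := by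
  intro a b hr
  obtain ⟨w⟩ := hr
  induction w with
  | nil => exact Reachable.refl _
  | cons h p ih => exact (hadj _ _ h).trans ih

lemma adj_vA_vB (F : Equiv.Perm (Fin (2*(n+1)))) :
    (matchGraph (n+1) F).Adj (vA n) (vB n) := by
  refine ⟨vA_ne_vB, Or.inl ?_⟩
  simp only [vA_val, vB_val]
  omega

/-! #### Case A -/

lemma adjA_emb (f : PerfectMatching n) {a b : Fin (2*n)}
    (h : (matchGraph n f.1).Adj a b) :
    (matchGraph (n+1) (Phi1 f).1).Adj (emb n a) (emb n b) := by
  refine ⟨fun he => h.1 (emb_inj he), ?_⟩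
  rcases h.2 with hb | hr | hr
  · exact Or.inl (by simpa using hb)
  · exact Or.inr (Or.inl (by rw [Phi1_apply, g1_emb, hr]))
  · exact Or.inr (Or.inr (by rw [Phi1_apply, g1_emb, hr]))

def cA (f : PerfectMatching n) (x : Fin (2*(n+1))) :
    (matchGraph n f.1).ConnectedComponent ⊕ Unit :=
  if h : (x:ℕ) < 2*n then Sum.inl ((matchGraph n f.1).connectedComponentMk ⟨x,h⟩)
  else Sum.inr ()

lemma cA_adj (f : PerfectMatching n) (x y : Fin (2*(n+1)))
    (h : (matchGraph (n+1) (Phi1 f).1).Adj x y) : cA f x = cA f y := by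
  obtain ⟨hne, hor⟩ := h
  by_cases hx : (x:ℕ) < 2*n <;> by_cases hy : (y:ℕ) < 2*n
  · rw [cA, cA, dif_pos hx, dif_pos hy]
    congr 1
    apply ConnectedComponent.connectedComponentMk_eq_of_adj
    refine ⟨fun he => hne (Fin.ext (Fin.mk_eq_mk.1 he)), ?_⟩
    rcases hor with hb | hr | hr
    · exact Or.inl hb
    · rw [Phi1_apply, g1_small f.1 hx] at hr
      exact Or.inr (Or.inl (Fin.ext (show ((f.1 ⟨x,hx⟩ : Fin (2*n)) : ℕ) = (y:ℕ) from congrArg Fin.val hr)))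
    · rw [Phi1_apply, g1_small f.1 hy] at hr
      exact Or.inr (Or.inr (Fin.ext (show ((f.1 ⟨y,hy⟩ : Fin (2*n)) : ℕ) = (x:ℕ) from congrArg Fin.val hr)))
  · exfalso
    rcases hor with hb | hr | hr
    · rcases big_cases hy with rfl | rfl
      · simp only [vA_val] at hb; omega
      · simp only [vB_val] at hb; omega
    · rw [Phi1_apply, g1_small f.1 hx] at hr
      have := congrArg Fin.val hr
      have h2 := (f.1 ⟨x, hx⟩).isLt
      rw [emb_val] at this
      rcases big_cases hy with rfl | rfl
      · rw [vA_val] at this; omega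
      · rw [vB_val] at this; omega
    · rcases big_cases hy with rfl | rfl
      · rw [Phi1_apply, g1_A] at hr
        have := congrArg Fin.val hr
        rw [vB_val] at this; omega
      · rw [Phi1_apply, g1_B] at hr
        have := congrArg Fin.val hr
        rw [vA_val] at this; omega
  · exfalso
    rcases hor with hb | hr | hr
    · rcases big_cases hx with rfl | rfl
      · simp only [vA_val] at hb; omega
      · simp only [vB_val] at hb; omega
    · rcases big_cases hx with rfl | rfl
      · rw [Phi1_apply, g1_A] at hr
        have := congrArg Fin.val hr
        rw [vB_val] at this; omega
      · rw [Phi1_apply, g1_B] at hr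
        have := congrArg Fin.val hr
        rw [vA_val] at this; omega
    · rw [Phi1_apply, g1_small f.1 hy] at hr
      have := congrArg Fin.val hr
      have h2 := (f.1 ⟨y, hy⟩).isLt
      rw [emb_val] at this
      rcases big_cases hx with rfl | rfl
      · rw [vA_val] at this; omega
      · rw [vB_val] at this; omega
  · rw [cA, cA, dif_neg hx, dif_neg hy]

lemma compA (f : PerfectMatching n) :
    Nat.card (matchGraph (n+1) (Phi1 f).1).ConnectedComponent
      = Nat.card (matchGraph n f.1).ConnectedComponent + 1 := by
  classical
  have hbij : Function.Bijective
      (Quot.lift (cA f) (fun a b hr => eq_of_reachable (cA f) (cA_adj f) hr) :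
        (matchGraph (n+1) (Phi1 f).1).ConnectedComponent →
          (matchGraph n f.1).ConnectedComponent ⊕ Unit) := by
    constructor
    · intro c d
      refine ConnectedComponent.ind₂ (fun x y h => ?_) c d
      have h : cA f x = cA f y := h
      by_cases hx : (x:ℕ) < 2*n <;> by_cases hy : (y:ℕ) < 2*n
      · rw [cA, cA, dif_pos hx, dif_pos hy] at h
        have h2 := Sum.inl_injective h
        have h3 : (matchGraph n f.1).Reachable ⟨x,hx⟩ ⟨y,hy⟩ :=
          (ConnectedComponent.eq).1 h2
        have h4 := reachable_lift (emb n) (fun a b hab => (adjA_emb f hab).reachable) h3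
        have hex : emb n (⟨x,hx⟩ : Fin (2*n)) = x := Fin.ext rfl
        have hey : emb n (⟨y,hy⟩ : Fin (2*n)) = y := Fin.ext rfl
        rw [hex, hey] at h4
        exact ConnectedComponent.sound h4
      · rw [cA, cA, dif_pos hx, dif_neg hy] at h; exact absurd h (by simp)
      · rw [cA, cA, dif_neg hx, dif_pos hy] at h; exact absurd h (by simp)
      · have hAB : (matchGraph (n+1) (Phi1 f).1).connectedComponentMk (vA n)
            = (matchGraph (n+1) (Phi1 f).1).connectedComponentMk (vB n) :=
          ConnectedComponent.connectedComponentMk_eq_of_adj (adj_vA_vB _)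
        rcases big_cases hx with rfl | rfl <;> rcases big_cases hy with rfl | rfl
        · rfl
        · exact hAB
        · exact hAB.symm
        · rfl
    · intro z
      rcases z with c | u
      · refine ConnectedComponent.ind (fun a => ?_) c
        refine ⟨(matchGraph (n+1) (Phi1 f).1).connectedComponentMk (emb n a), ?_⟩
        show cA f (emb n a) = Sum.inl ((matchGraph n f.1).connectedComponentMk a)
        rw [cA, dif_pos (emb_lt a)]
        have : (⟨((emb n a) : ℕ), emb_lt a⟩ : Fin (2*n)) = a := Fin.ext rfl
        rw [this]
      · refine ⟨(matchGraph (n+1) (Phi1 f).1).connectedComponentMk (vA n), ?_⟩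
        show cA f (vA n) = Sum.inr u
        rw [cA, dif_neg (by simp)]
  have hc : Nat.card (matchGraph (n+1) (Phi1 f).1).ConnectedComponent
      = Nat.card ((matchGraph n f.1).ConnectedComponent ⊕ Unit) :=
    Nat.card_eq_of_bijective _ hbij
  rw [hc, Nat.card_sum]
  simp


/-! #### Case B -/

variable (f : PerfectMatching n) (u : Fin (2*n))

def cB (x : Fin (2*(n+1))) : (matchGraph n f.1).ConnectedComponent :=
  if h : (x:ℕ) < 2*n then (matchGraph n f.1).connectedComponentMk ⟨x,h⟩
  else if (x:ℕ) = 2*n then (matchGraph n f.1).connectedComponentMk u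
  else (matchGraph n f.1).connectedComponentMk (f.1 u)

lemma cB_emb (a : Fin (2*n)) : cB f u (emb n a) = (matchGraph n f.1).connectedComponentMk a := by
  rw [cB, dif_pos (emb_lt a)]
  have : (⟨((emb n a) : ℕ), emb_lt a⟩ : Fin (2*n)) = a := Fin.ext rfl
  rw [this]

lemma cB_A : cB f u (vA n) = (matchGraph n f.1).connectedComponentMk u := by
  rw [cB, dif_neg (by simp), if_pos (show ((vA n : Fin (2*(n+1))) : ℕ) = 2*n from rfl)]

lemma cB_B : cB f u (vB n) = (matchGraph n f.1).connectedComponentMk (f.1 u) := by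
  rw [cB, dif_neg (by simp)]
  have h1 : ((vB n : Fin (2*(n+1))) : ℕ) ≠ 2*n := by simp
  rw [if_neg h1]

-- adjacency of `vA` with `emb u`, and `vB` with `emb (f u)` in the big graph.
lemma adjB_Au : (matchGraph (n+1) (Phi2 f u).1).Adj (vA n) (emb n u) := by
  refine ⟨fun h => emb_ne_vA u h.symm, Or.inr (Or.inl ?_)⟩
  rw [Phi2_apply, g2_A]

lemma adjB_Bfu : (matchGraph (n+1) (Phi2 f u).1).Adj (vB n) (emb n (f.1 u)) := by
  refine ⟨fun h => emb_ne_vB (f.1 u) h.symm, Or.inr (Or.inl ?_)⟩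
  rw [Phi2_apply, g2_B]

lemma reach_u_fu : (matchGraph (n+1) (Phi2 f u).1).Reachable (emb n u) (emb n (f.1 u)) :=
  ((adjB_Au f u).symm.reachable.trans (adj_vA_vB _).reachable).trans (adjB_Bfu f u).reachable

lemma adjB_emb {a b : Fin (2*n)} (h : (matchGraph n f.1).Adj a b) :
    (matchGraph (n+1) (Phi2 f u).1).Reachable (emb n a) (emb n b) := by
  obtain ⟨hne, hor⟩ := h
  have hred : ∀ a b : Fin (2*n), a ≠ b → f.1 a = b →
      (matchGraph (n+1) (Phi2 f u).1).Reachable (emb n a) (emb n b) := by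
    intro a b hne hr
    by_cases h1 : a = u
    · subst h1; rw [← hr]; exact reach_u_fu f a
    · by_cases h2 : a = f.1 u
      · have hb : b = u := by rw [← hr, h2, f.2.1]
        subst hb
        rw [h2]
        exact (reach_u_fu f b).symm
      · refine SimpleGraph.Adj.reachable ⟨fun he => hne (emb_inj he), Or.inr (Or.inl ?_)⟩
        rw [Phi2_apply, g2_emb_of f.1 u a h1 h2, hr]
  rcases hor with hb | hr | hr
  · exact SimpleGraph.Adj.reachable ⟨fun he => hne (emb_inj he), Or.inl (by simpa using hb)⟩
  · exact hred a b hne hr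
  · exact (hred b a hne.symm hr).symm

lemma cB_adj (x y : Fin (2*(n+1)))
    (h : (matchGraph (n+1) (Phi2 f u).1).Adj x y) : cB f u x = cB f u y := by
  obtain ⟨hne, hor⟩ := h
  by_cases hx : (x:ℕ) < 2*n <;> by_cases hy : (y:ℕ) < 2*n
  · -- both small : they are adjacent in the small graph
    rw [cB, cB, dif_pos hx, dif_pos hy]
    apply ConnectedComponent.connectedComponentMk_eq_of_adj
    refine ⟨fun he => hne (Fin.ext (Fin.mk_eq_mk.1 he)), ?_⟩
    rcases hor with hb | hr | hr
    · exact Or.inl hb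
    · rw [Phi2_apply, g2_small f.1 u hx] at hr
      split_ifs at hr with h1 h2
      · exact absurd (congrArg Fin.val hr).symm (by simp; omega)
      · exact absurd (congrArg Fin.val hr).symm (by simp; omega)
      · exact Or.inr (Or.inl (Fin.ext (show ((f.1 ⟨x,hx⟩ : Fin (2*n)) : ℕ) = (y:ℕ) from
          congrArg Fin.val hr)))
    · rw [Phi2_apply, g2_small f.1 u hy] at hr
      split_ifs at hr with h1 h2
      · exact absurd (congrArg Fin.val hr).symm (by simp; omega)
      · exact absurd (congrArg Fin.val hr).symm (by simp; omega)
      · exact Or.inr (Or.inr (Fin.ext (show ((f.1 ⟨y,hy⟩ : Fin (2*n)) : ℕ) = (x:ℕ) from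
          congrArg Fin.val hr)))
  · -- x small, y big
    have hxe : emb n (⟨(x:ℕ),hx⟩ : Fin (2*n)) = x := Fin.ext rfl
    rcases big_cases hy with rfl | rfl
    · -- y = vA : x must be u
      have hxu : (⟨(x:ℕ),hx⟩ : Fin (2*n)) = u := by
        rcases hor with hb | hr | hr
        · exfalso; rw [vA_val] at hb; omega
        · rw [Phi2_apply, g2_small f.1 u hx] at hr
          split_ifs at hr with h1 h2
          · exact h1
          · exact absurd (congrArg Fin.val hr) (by simp)
          · exact absurd (congrArg Fin.val hr) (by
              simp only [emb_val, vA_val]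
              have := (f.1 ⟨(x:ℕ),hx⟩).isLt; omega)
        · rw [Phi2_apply, g2_A] at hr
          apply emb_inj
          rw [hxe, ← hr]
      rw [cB_A, ← hxe, cB_emb, hxu]
    · -- y = vB : x must be f u
      have hxu : (⟨(x:ℕ),hx⟩ : Fin (2*n)) = f.1 u := by
        rcases hor with hb | hr | hr
        · exfalso; rw [vB_val] at hb; omega
        · rw [Phi2_apply, g2_small f.1 u hx] at hr
          split_ifs at hr with h1 h2
          · exact absurd (congrArg Fin.val hr) (by simp)
          · exact h2
          · exact absurd (congrArg Fin.val hr) (by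
              simp only [emb_val, vB_val]
              have := (f.1 ⟨(x:ℕ),hx⟩).isLt; omega)
        · rw [Phi2_apply, g2_B] at hr
          apply emb_inj
          rw [hxe, ← hr]
      rw [cB_B, ← hxe, cB_emb, hxu]
  · -- x big, y small : symmetric
    have hye : emb n (⟨(y:ℕ),hy⟩ : Fin (2*n)) = y := Fin.ext rfl
    have hor' : (y:ℕ)/2 = (x:ℕ)/2 ∨ (Phi2 f u).1 y = x ∨ (Phi2 f u).1 x = y := by
      rcases hor with hb | hr | hr
      · exact Or.inl hb.symm
      · exact Or.inr (Or.inr hr)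
      · exact Or.inr (Or.inl hr)
    rcases big_cases hx with rfl | rfl
    · have hyu : (⟨(y:ℕ),hy⟩ : Fin (2*n)) = u := by
        rcases hor' with hb | hr | hr
        · exfalso; rw [vA_val] at hb; omega
        · rw [Phi2_apply, g2_small f.1 u hy] at hr
          split_ifs at hr with h1 h2
          · exact h1
          · exact absurd (congrArg Fin.val hr) (by simp)
          · exact absurd (congrArg Fin.val hr) (by
              simp only [emb_val, vA_val]
              have := (f.1 ⟨(y:ℕ),hy⟩).isLt; omega)
        · rw [Phi2_apply, g2_A] at hr
          apply emb_inj
          rw [hye, ← hr]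
      rw [cB_A, ← hye, cB_emb, hyu]
    · have hyu : (⟨(y:ℕ),hy⟩ : Fin (2*n)) = f.1 u := by
        rcases hor' with hb | hr | hr
        · exfalso; rw [vB_val] at hb; omega
        · rw [Phi2_apply, g2_small f.1 u hy] at hr
          split_ifs at hr with h1 h2
          · exact absurd (congrArg Fin.val hr) (by simp)
          · exact h2
          · exact absurd (congrArg Fin.val hr) (by
              simp only [emb_val, vB_val]
              have := (f.1 ⟨(y:ℕ),hy⟩).isLt; omega)
        · rw [Phi2_apply, g2_B] at hr
          apply emb_inj
          rw [hye, ← hr]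
      rw [cB_B, ← hye, cB_emb, hyu]
  · -- both big
    have hadj : (matchGraph n f.1).Adj u (f.1 u) :=
      ⟨fun h => f.2.2 u h.symm, Or.inr (Or.inl rfl)⟩
    have hAB : cB f u (vA n) = cB f u (vB n) := by
      rw [cB_A, cB_B]
      exact ConnectedComponent.connectedComponentMk_eq_of_adj hadj
    rcases big_cases hx with rfl | rfl <;> rcases big_cases hy with rfl | rfl
    · rfl
    · exact hAB
    · exact hAB.symm
    · rfl

lemma cB_reach (x : Fin (2*(n+1))) : ∃ a : Fin (2*n),
    cB f u x = (matchGraph n f.1).connectedComponentMk a ∧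
    (matchGraph (n+1) (Phi2 f u).1).Reachable x (emb n a) := by
  rcases cases3 x with ⟨a, rfl⟩ | rfl | rfl
  · exact ⟨a, cB_emb f u a, SimpleGraph.Reachable.refl _⟩
  · exact ⟨u, cB_A f u, (adjB_Au f u).reachable⟩
  · exact ⟨f.1 u, cB_B f u, (adjB_Bfu f u).reachable⟩

lemma compB :
    Nat.card (matchGraph (n+1) (Phi2 f u).1).ConnectedComponent
      = Nat.card (matchGraph n f.1).ConnectedComponent := by
  classical
  have hbij : Function.Bijective
      (Quot.lift (cB f u) (fun a b hr => eq_of_reachable (cB f u) (cB_adj f u) hr) :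
        (matchGraph (n+1) (Phi2 f u).1).ConnectedComponent →
          (matchGraph n f.1).ConnectedComponent) := by
    constructor
    · intro c d
      refine ConnectedComponent.ind₂ (fun x y h => ?_) c d
      have h : cB f u x = cB f u y := h
      obtain ⟨a, ha1, ha2⟩ := cB_reach f u x
      obtain ⟨b, hb1, hb2⟩ := cB_reach f u y
      have hab : (matchGraph n f.1).Reachable a b := by
        apply ConnectedComponent.exact
        rw [← ha1, ← hb1, h]
      have h4 := reachable_lift (emb n) (fun a b hab => adjB_emb f u hab) hab
      exact ConnectedComponent.sound ((ha2.trans h4).trans hb2.symm)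
    · intro c
      refine ConnectedComponent.ind (fun a => ?_) c
      refine ⟨(matchGraph (n+1) (Phi2 f u).1).connectedComponentMk (emb n a), ?_⟩
      exact cB_emb f u a
  exact Nat.card_eq_of_bijective _ hbij


/-! ### The bijection -/

lemma small_of_ne {x : Fin (2*(n+1))} (h1 : x ≠ vA n) (h2 : x ≠ vB n) : (x:ℕ) < 2*n := by
  have h3 := x.isLt
  rcases Nat.lt_or_ge (x:ℕ) (2*n) with h | h
  · exact h
  · exfalso
    rcases Nat.eq_or_lt_of_le h with h4 | h4
    · exact h1 (Fin.ext h4.symm)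
    · exact h2 (Fin.ext (show (x:ℕ) = 2*n+1 by omega))

def PhiSum (n : ℕ) : PerfectMatching n ⊕ PerfectMatching n × Fin (2*n) → PerfectMatching (n+1) :=
  Sum.elim Phi1 (fun p => Phi2 p.1 p.2)

lemma phi_inj : Function.Injective (PhiSum n) := by
  intro z1 z2 h
  rcases z1 with f1 | ⟨f1, u1⟩ <;> rcases z2 with f2 | ⟨f2, u2⟩
  · have hfun : ∀ x, g1 f1.1 x = g1 f2.1 x :=
      fun x => congrArg (fun (F : PerfectMatching (n+1)) => F.1 x) h
    have hext : ∀ a, f1.1 a = f2.1 a := by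
      intro a
      have h1 := hfun (emb n a)
      rw [g1_emb, g1_emb] at h1
      exact emb_inj h1
    rw [show f1 = f2 from Subtype.ext (Equiv.ext hext)]
  · exfalso
    have hfun : ∀ x, g1 f1.1 x = g2 f2.1 u2 x :=
      fun x => congrArg (fun (F : PerfectMatching (n+1)) => F.1 x) h
    have h1 := hfun (vA n)
    rw [g1_A, g2_A] at h1
    exact emb_ne_vB u2 h1.symm
  · exfalso
    have hfun : ∀ x, g2 f1.1 u1 x = g1 f2.1 x :=
      fun x => congrArg (fun (F : PerfectMatching (n+1)) => F.1 x) h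
    have h1 := hfun (vA n)
    rw [g1_A, g2_A] at h1
    exact emb_ne_vB u1 h1
  · have hfun : ∀ x, g2 f1.1 u1 x = g2 f2.1 u2 x :=
      fun x => congrArg (fun (F : PerfectMatching (n+1)) => F.1 x) h
    have hu : u1 = u2 := by
      have h1 := hfun (vA n)
      rw [g2_A, g2_A] at h1
      exact emb_inj h1
    subst hu
    have hfu : f1.1 u1 = f2.1 u1 := by
      have h1 := hfun (vB n)
      rw [g2_B, g2_B] at h1
      exact emb_inj h1
    have hext : ∀ a, f1.1 a = f2.1 a := by
      intro a
      by_cases ha1 : a = u1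
      · rw [ha1]; exact hfu
      · by_cases ha2 : a = f1.1 u1
        · rw [ha2, f1.2.1, hfu, f2.2.1]
        · have ha2' : a ≠ f2.1 u1 := by rw [← hfu]; exact ha2
          have h1 := hfun (emb n a)
          rw [g2_emb_of f1.1 u1 a ha1 ha2, g2_emb_of f2.1 u1 a ha1 ha2'] at h1
          exact emb_inj h1
    rw [show f1 = f2 from Subtype.ext (Equiv.ext hext)]

lemma phi_surj : Function.Surjective (PhiSum n) := by
  rintro ⟨g, hinv, hfp⟩
  have hginj : Function.Injective g := g.injective
  by_cases hA : g (vA n) = vB n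
  · -- case A : the last black pair is matched to itself
    have hB : g (vB n) = vA n := by rw [← hA, hinv]
    have hsmall : ∀ a : Fin (2*n), ((g (emb n a)) : ℕ) < 2*n := by
      intro a
      apply small_of_ne
      · intro hh
        exact emb_ne_vB a (hginj (hh.trans hB.symm))
      · intro hh
        exact emb_ne_vA a (hginj (hh.trans hA.symm))
    set s : Fin (2*n) → Fin (2*n) := fun a => ⟨(g (emb n a) : ℕ), hsmall a⟩ with hs
    have hs_emb : ∀ a, emb n (s a) = g (emb n a) := fun a => Fin.ext rfl
    have hsinv : Function.Involutive s := by
      intro a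
      apply emb_inj
      rw [hs_emb, hs_emb, hinv]
    have hsfp : ∀ a, s a ≠ a := by
      intro a hh
      exact hfp (emb n a) ((hs_emb a).symm.trans (congrArg (emb n) hh))
    refine ⟨Sum.inl ⟨(Function.Involutive.toPerm s hsinv), hsinv, hsfp⟩, Subtype.ext (Equiv.ext fun x => ?_)⟩
    show g1 ((Function.Involutive.toPerm s hsinv)) x = g x
    rcases cases3 x with ⟨a, rfl⟩ | rfl | rfl
    · rw [g1_emb]; exact hs_emb a
    · rw [g1_A]; exact hA.symm
    · rw [g1_B]; exact hB.symm
  · -- case B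
    have hAA : g (vA n) ≠ vA n := hfp (vA n)
    have hUlt : ((g (vA n)) : ℕ) < 2*n := small_of_ne hAA hA
    set U : Fin (2*n) := ⟨(g (vA n) : ℕ), hUlt⟩ with hUdef
    have hU : emb n U = g (vA n) := Fin.ext rfl
    have hBA : g (vB n) ≠ vA n := by
      intro hh; apply hA; rw [← hh, hinv]
    have hBB : g (vB n) ≠ vB n := hfp (vB n)
    have hVlt : ((g (vB n)) : ℕ) < 2*n := small_of_ne hBA hBB
    set V : Fin (2*n) := ⟨(g (vB n) : ℕ), hVlt⟩ with hVdef
    have hV : emb n V = g (vB n) := Fin.ext rfl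
    have hUV : U ≠ V := by
      intro hh
      have h1 : g (vA n) = g (vB n) := by
        rw [← hU, ← hV, hh]
      exact vA_ne_vB (hginj h1)
    have hgeU : g (emb n U) = vA n := by rw [hU, hinv]
    have hgeV : g (emb n V) = vB n := by rw [hV, hinv]
    have hsm : ∀ a : Fin (2*n), a ≠ U → a ≠ V → ((g (emb n a)) : ℕ) < 2*n := by
      intro a h1 h2
      apply small_of_ne
      · intro hh
        apply h1
        apply emb_inj
        rw [hU]
        rw [← hh, hinv]
      · intro hh
        apply h2
        apply emb_inj
        rw [hV]
        rw [← hh, hinv]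
    set s : Fin (2*n) → Fin (2*n) := fun a =>
      if h1 : a = U then V else if h2 : a = V then U
      else ⟨(g (emb n a) : ℕ), hsm a h1 h2⟩ with hs
    have hsU : s U = V := by simp [hs]
    have hsV : s V = U := by simp only [hs]; rw [dif_neg (Ne.symm hUV)]; simp
    have hs_other : ∀ a, a ≠ U → a ≠ V → emb n (s a) = g (emb n a) := by
      intro a h1 h2
      simp only [hs]
      rw [dif_neg h1, dif_neg h2]
      exact Fin.ext rfl
    have hsinv : Function.Involutive s := by
      intro a
      by_cases h1 : a = U
      · rw [h1, hsU, hsV]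
      · by_cases h2 : a = V
        · rw [h2, hsV, hsU]
        · have hne1 : s a ≠ U := by
            intro hh
            have h3 := congrArg (emb n) hh
            rw [hs_other a h1 h2, hU] at h3
            exact emb_ne_vA a (hginj h3)
          have hne2 : s a ≠ V := by
            intro hh
            have h3 := congrArg (emb n) hh
            rw [hs_other a h1 h2, hV] at h3
            exact emb_ne_vB a (hginj h3)
          apply emb_inj
          rw [hs_other (s a) hne1 hne2, hs_other a h1 h2, hinv]
    have hsfp : ∀ a, s a ≠ a := by
      intro a hh
      by_cases h1 : a = U
      · rw [h1, hsU] at hh; exact hUV hh.symm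
      · by_cases h2 : a = V
        · rw [h2, hsV] at hh; exact hUV hh
        · have h3 := congrArg (emb n) hh
          rw [hs_other a h1 h2] at h3
          exact hfp (emb n a) h3
    refine ⟨Sum.inr ⟨⟨(Function.Involutive.toPerm s hsinv), hsinv, hsfp⟩, U⟩, Subtype.ext (Equiv.ext fun x => ?_)⟩
    show g2 ((Function.Involutive.toPerm s hsinv)) U x = g x
    rcases cases3 x with ⟨a, rfl⟩ | rfl | rfl
    · by_cases h1 : a = U
      · rw [h1, g2_u]
        rw [hU]
        exact (hinv _).symm
      · by_cases h2 : a = V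
        · have hafu : a = (Function.Involutive.toPerm s hsinv) U := by rw [h2]; exact hsU.symm
          rw [hafu, g2_fu ((Function.Involutive.toPerm s hsinv)) U (fun hh => hUV ((hsU.symm.trans hh).symm))]
          have h3 : emb n (((Function.Involutive.toPerm s hsinv)) U) = g (vB n) := by
            show emb n (s U) = g (vB n)
            rw [hsU, hV]
          rw [h3]
          exact (hinv _).symm
        · have h2' : a ≠ (Function.Involutive.toPerm s hsinv) U := by
            show a ≠ s U
            rw [hsU]; exact h2
          rw [g2_emb_of ((Function.Involutive.toPerm s hsinv)) U a h1 h2']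
          exact hs_other a h1 h2
    · rw [g2_A]; exact hU
    · rw [g2_B]
      show emb n (s U) = g (vB n)
      rw [hsU, hV]

/-! ### Main theorem -/

lemma key (k : ℕ) : ∀ n : ℕ,
    ∑ f : PerfectMatching n, k ^ Nat.card (matchGraph n f.1).ConnectedComponent =
      ∏ j ∈ Finset.range n, (k + 2 * j) := by
  intro n
  induction n with
  | zero =>
    haveI hE : IsEmpty (Fin (2*0)) := ⟨fun x => absurd x.isLt (by omega)⟩
    haveI : Unique (PerfectMatching 0) :=
      { default := ⟨1, fun x => absurd x.isLt (by omega), fun x => absurd x.isLt (by omega)⟩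
        uniq := fun f => Subtype.ext (Equiv.ext fun x => absurd x.isLt (by omega)) }
    have h1 : ∀ f : PerfectMatching 0,
        k ^ Nat.card (matchGraph 0 f.1).ConnectedComponent = 1 := by
      intro f
      rw [Nat.card_of_isEmpty, pow_zero]
    rw [Finset.sum_congr rfl (fun f _ => h1 f), Finset.sum_const, smul_eq_mul, mul_one,
      Finset.card_univ, Fintype.card_unique, Finset.prod_range_zero]
  | succ m ih =>
    have hbb : Function.Bijective (PhiSum m) := ⟨phi_inj, phi_surj⟩
    have hsum := Fintype.sum_bijective (PhiSum m) hbb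
      (fun z => k ^ Nat.card (matchGraph (m+1) (PhiSum m z).1).ConnectedComponent)
      (fun F => k ^ Nat.card (matchGraph (m+1) F.1).ConnectedComponent)
      (fun z => rfl)
    rw [← hsum, Fintype.sum_sum_type]
    have hL : ∀ f : PerfectMatching m,
        k ^ Nat.card (matchGraph (m+1) (PhiSum m (Sum.inl f)).1).ConnectedComponent =
          k ^ Nat.card (matchGraph m f.1).ConnectedComponent * k := by
      intro f
      show k ^ Nat.card (matchGraph (m+1) (Phi1 f).1).ConnectedComponent = _
      rw [compA, pow_succ]
    have hR : ∀ p : PerfectMatching m × Fin (2*m),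
        k ^ Nat.card (matchGraph (m+1) (PhiSum m (Sum.inr p)).1).ConnectedComponent =
          k ^ Nat.card (matchGraph m p.1.1).ConnectedComponent := by
      intro p
      show k ^ Nat.card (matchGraph (m+1) (Phi2 p.1 p.2).1).ConnectedComponent = _
      rw [compB]
    rw [Finset.sum_congr rfl (fun f _ => hL f), Finset.sum_congr rfl (fun p _ => hR p),
      ← Finset.sum_mul, ih]
    rw [Fintype.sum_prod_type]
    have h2 : ∀ f : PerfectMatching m,
        ∑ _u : Fin (2*m), k ^ Nat.card (matchGraph m f.1).ConnectedComponent =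
          k ^ Nat.card (matchGraph m f.1).ConnectedComponent * (2*m) := by
      intro f
      rw [Finset.sum_const, Finset.card_univ, Fintype.card_fin, smul_eq_mul, mul_comm]
    rw [Finset.sum_congr rfl (fun f _ => h2 f), ← Finset.sum_mul, ih,
      Finset.prod_range_succ]
    ring

/-- For `n ≥ 1` and `k : ℕ`, the sum of `k^{C(G_M)}` over all perfect
matchings `M` of `{1,…,2n}` equals `k(k+2)⋯(k+2n-2)`. -/
theorem sum_pow_card_connectedComponent_matchGraph (n k : ℕ) (hn : 1 ≤ n) :
    ∑ f : PerfectMatching n, k ^ Nat.card (matchGraph n f.1).ConnectedComponent =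
      ∏ j ∈ Finset.range n, (k + 2 * j) :=
  key k n

end GBS
end

section
/- Let n ≥ 1 and k ≥ 1 be natural numbers, and let X be a k×2n random matrix whose entries are independent standard complex Gaussian random variables. Then E[ |Haf(XᵀX)|² ] = ((2n)! / (2^n n!)) · ∏_{j=0}^{n−1} (k + 2j), equivalently E[|Haf(XᵀX)|²] = (2n−1)!! · (k+2n−2)!!/(k−2)!!. -/
open scoped BigOperators
open MeasureTheory ProbabilityTheory Matrix

namespace GBS

/-- The distribution of a standard complex Gaussian random variable `Z = A + iB`, where `A, B`
are independent real Gaussians with mean `0` and variance `1/2` (so `E[Z] = 0`, `E[|Z|²] = 1`). -/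
noncomputable def stdComplexGaussian : Measure ℂ :=
  Measure.map Complex.measurableEquivRealProd.symm
    ((gaussianReal 0 (1 / 2)).prod (gaussianReal 0 (1 / 2)))

instance : IsProbabilityMeasure stdComplexGaussian :=
  Measure.isProbabilityMeasure_map Complex.measurableEquivRealProd.symm.measurable.aemeasurable

/-- The distribution of a `k × 2n` random matrix with i.i.d. standard complex Gaussian entries,
as a measure on `Fin k → Fin (2*n) → ℂ`. -/
noncomputable def gaussianMatrix (k n : ℕ) : Measure (Fin k → Fin (2 * n) → ℂ) :=
  Measure.pi fun _ => Measure.pi fun _ => stdComplexGaussian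

/-- The 0-indexed version of the 1-indexed element `2j-1` of `{1,…,2n}`. -/
def lo (n : ℕ) (j : Fin n) : Fin (2 * n) := ⟨2 * (j : ℕ), by omega⟩

/-- The 0-indexed version of the 1-indexed element `2j` of `{1,…,2n}`. -/
def hi (n : ℕ) (j : Fin n) : Fin (2 * n) := ⟨2 * (j : ℕ) + 1, by omega⟩

/-- The hafnian of a `2n × 2n` complex matrix:
`Haf(A) = (1/(2^n n!)) ∑_{σ ∈ S_{2n}} ∏_{j=1}^n A_{σ(2j−1), σ(2j)}`. -/
noncomputable def hafnian (n : ℕ) (A : Matrix (Fin (2 * n)) (Fin (2 * n)) ℂ) : ℂ :=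
  (1 / (2 ^ n * n.factorial : ℂ)) *
    ∑ σ : Equiv.Perm (Fin (2 * n)), ∏ j : Fin n, A (σ (lo n j)) (σ (hi n j))

/-! ### Pairing combinatorics -/

def pairIdx (n : ℕ) (a : Fin (2 * n)) : Fin n := ⟨(a : ℕ) / 2, by have := a.isLt; omega⟩

@[simp] lemma pairIdx_lo (n : ℕ) (j : Fin n) : pairIdx n (lo n j) = j := by
  apply Fin.ext
  show (((lo n j) : ℕ)) / 2 = (j : ℕ)
  simp only [lo]
  omega

@[simp] lemma pairIdx_hi (n : ℕ) (j : Fin n) : pairIdx n (hi n j) = j := by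
  apply Fin.ext
  show (((hi n j) : ℕ)) / 2 = (j : ℕ)
  simp only [hi]
  omega

lemma lo_or_hi (n : ℕ) (a : Fin (2 * n)) :
    a = lo n (pairIdx n a) ∨ a = hi n (pairIdx n a) := by
  rcases Nat.even_or_odd (a : ℕ) with h | h
  · left
    apply Fin.ext
    show (a : ℕ) = 2 * ((a : ℕ) / 2)
    rw [Nat.even_iff] at h
    omega
  · right
    apply Fin.ext
    show (a : ℕ) = 2 * ((a : ℕ) / 2) + 1
    rw [Nat.odd_iff] at h
    omega

def pairEquiv (n : ℕ) : Fin n × Bool ≃ Fin (2 * n) where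
  toFun x := if x.2 then hi n x.1 else lo n x.1
  invFun a := (pairIdx n a, (a : ℕ) % 2 == 1)
  left_inv := by
    rintro ⟨j, b⟩
    cases b <;>
      · simp only [Bool.false_eq_true, if_false, if_true, Prod.mk.injEq, pairIdx_lo, pairIdx_hi,
          true_and]
        simp only [lo, hi, beq_eq_false_iff_ne, ne_eq, beq_iff_eq]
        omega
  right_inv := by
    intro a
    rcases Nat.even_or_odd (a : ℕ) with h | h <;> [rw [Nat.even_iff] at h; rw [Nat.odd_iff] at h]
    · have h2 : ((a : ℕ) % 2 == 1) = false := by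
        simp only [beq_eq_false_iff_ne, ne_eq]; omega
      simp only [h2, if_neg Bool.false_ne_true]
      apply Fin.ext
      show 2 * ((a : ℕ) / 2) = (a : ℕ)
      omega
    · have h2 : ((a : ℕ) % 2 == 1) = true := by
        simp only [beq_iff_eq]; omega
      simp only [h2, if_pos rfl]
      apply Fin.ext
      show 2 * ((a : ℕ) / 2) + 1 = (a : ℕ)
      omega

lemma prod_pair {M : Type*} [CommMonoid M] (n : ℕ) (F : Fin (2 * n) → M) :
    ∏ a, F a = ∏ j, F (lo n j) * F (hi n j) := by
  rw [← Equiv.prod_comp (pairEquiv n) F, Fintype.prod_prod_type]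
  refine Finset.prod_congr rfl fun j _ => ?_
  rw [Fintype.prod_bool]
  show F (hi n j) * F (lo n j) = _
  rw [mul_comm]

lemma sum_pair {M : Type*} [AddCommMonoid M] (n : ℕ) (F : Fin (2 * n) → M) :
    ∑ a, F a = ∑ j, (F (lo n j) + F (hi n j)) := by
  rw [← Equiv.sum_comp (pairEquiv n) F, Fintype.sum_prod_type]
  refine Finset.sum_congr rfl fun j _ => ?_
  rw [Fintype.sum_bool]
  show F (hi n j) + F (lo n j) = _
  rw [add_comm]

/-! ### The odd double factorial -/

def odf : ℕ → ℕ
  | 0 => 1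
  | m + 1 => (2 * m + 1) * odf m

lemma factorial_two_mul (m : ℕ) : (2 * m).factorial = 2 ^ m * m.factorial * odf m := by
  induction m with
  | zero => simp [odf]
  | succ m ih =>
      have h : 2 * (m + 1) = (2 * m + 1) + 1 := by ring
      rw [h, Nat.factorial_succ, Nat.factorial_succ, ih]
      show _ = 2 ^ (m + 1) * ((m + 1) * m.factorial) * ((2 * m + 1) * odf m)
      ring

/-! ### Counting permutations compatible with colorings -/

section PermCount

variable {α κ : Type*} [DecidableEq α] [DecidableEq κ] [Fintype α] [Fintype κ]

omit [DecidableEq α] [DecidableEq κ] [Fintype α] [Fintype κ] in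
private lemma ecast {c d : α → κ} (E : (v : κ) → ({x // d x = v} ≃ {x // c x = v}))
    {x : α} {v : κ} (hv : d x = v) :
    ((E (d x)) ⟨x, rfl⟩ : {y // c y = d x}).1 = (E v ⟨x, hv⟩).1 := by
  subst hv; rfl

noncomputable def permCompEquiv (c d : α → κ) :
    {π : Equiv.Perm α // (fun x => c (π x)) = d} ≃
      ((v : κ) → ({x // d x = v} ≃ {x // c x = v})) where
  toFun π v := Equiv.subtypeEquiv π.1 (fun x => by
    rw [show c (π.1 x) = d x from congrFun π.2 x])
  invFun E := by
    refine ⟨Equiv.ofBijective (fun x => ((E (d x)) ⟨x, rfl⟩).1) ⟨?_, ?_⟩, ?_⟩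
    · intro x₁ x₂ hx
      dsimp only at hx
      have h₁ : c ((E (d x₁) ⟨x₁, rfl⟩).1) = d x₁ := (E (d x₁) ⟨x₁, rfl⟩).2
      have h₂ : c ((E (d x₂) ⟨x₂, rfl⟩).1) = d x₂ := (E (d x₂) ⟨x₂, rfl⟩).2
      have hd : d x₁ = d x₂ := by rw [← h₁, ← h₂, hx]
      have e1 : (E (d x₂) ⟨x₁, hd⟩ : {y // c y = d x₂}) = E (d x₂) ⟨x₂, rfl⟩ := by
        apply Subtype.ext
        rw [← ecast E hd]
        exact hx
      have := (E (d x₂)).injective e1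
      exact congrArg Subtype.val this
    · intro y
      dsimp only
      refine ⟨((E (c y)).symm ⟨y, rfl⟩).1, ?_⟩
      have hx : d (((E (c y)).symm ⟨y, rfl⟩).1) = c y := ((E (c y)).symm ⟨y, rfl⟩).2
      rw [ecast E hx]
      have h3 : (⟨((E (c y)).symm ⟨y, rfl⟩).1, hx⟩ : {x // d x = c y})
          = (E (c y)).symm ⟨y, rfl⟩ := Subtype.ext rfl
      rw [h3, Equiv.apply_symm_apply]
    · funext x
      exact ((E (d x)) ⟨x, rfl⟩).2
  left_inv := by
    intro π
    apply Subtype.ext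
    apply Equiv.ext
    intro x
    rfl
  right_inv := by
    intro E
    funext v
    apply Equiv.ext
    rintro ⟨x, hx⟩
    apply Subtype.ext
    exact ecast E hx

lemma card_perm_comp (c d : α → κ) :
    Fintype.card {π : Equiv.Perm α // (fun x => c (π x)) = d} =
      if ∀ v, Fintype.card {x // d x = v} = Fintype.card {x // c x = v}
      then ∏ v, (Fintype.card {x // c x = v}).factorial else 0 := by
  rw [Fintype.card_congr (permCompEquiv c d), Fintype.card_pi]
  by_cases H : ∀ v, Fintype.card {x // d x = v} = Fintype.card {x // c x = v}
  · rw [if_pos H]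
    refine Finset.prod_congr rfl fun v _ => ?_
    rw [Fintype.card_equiv (Fintype.equivOfCardEq (H v)), H v]
  · rw [if_neg H]
    push_neg at H
    obtain ⟨v, hv⟩ := H
    refine Finset.prod_eq_zero (Finset.mem_univ v) ?_
    exact Fintype.card_eq_zero_iff.2 ⟨fun e => hv (Fintype.card_congr e)⟩

end PermCount


/-! ### Counting colorings -/

def mcard (k n : ℕ) (g : Fin n → Fin k) (c : Fin k) : ℕ := Fintype.card {j // g j = c}

lemma card_fiber_pair {n k : ℕ} (g : Fin n → Fin k) (c : Fin k) :
    Fintype.card {a : Fin (2 * n) // g (pairIdx n a) = c} = 2 * mcard k n g c := by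
  rw [Fintype.card_subtype, Finset.card_filter, sum_pair, mcard, Fintype.card_subtype,
    Finset.card_filter, Finset.mul_sum]
  refine Finset.sum_congr rfl fun j _ => ?_
  rw [pairIdx_lo, pairIdx_hi]
  rcases em (g j = c) with h | h <;> simp [h]

lemma sum_mcard {n k : ℕ} (g : Fin n → Fin k) : ∑ c, mcard k n g c = n := by
  have h := Finset.card_eq_sum_card_fiberwise
    (fun (x : Fin n) (_ : x ∈ Finset.univ) => Finset.mem_univ (g x))
  simp only [Finset.card_univ, Fintype.card_fin] at h
  calc ∑ c, mcard k n g c = ∑ c, (Finset.univ.filter fun j => g j = c).card :=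
        Finset.sum_congr rfl fun c _ => Fintype.card_subtype _
    _ = n := h.symm

lemma cnt_mul_fact {n k : ℕ} (g : Fin n → Fin k) :
    (∑ q : Fin n → Fin k, if (∀ c, mcard k n q c = mcard k n g c) then 1 else 0) *
      ∏ c, (mcard k n g c).factorial = n.factorial := by
  have h0 : (Finset.univ : Finset (Equiv.Perm (Fin n))).card
      = ∑ q : Fin n → Fin k,
          (Finset.univ.filter fun ρ : Equiv.Perm (Fin n) => (fun x => g (ρ x)) = q).card :=
    Finset.card_eq_sum_card_fiberwise (fun ρ _ => Finset.mem_univ _)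
  have h1 : ∀ q : Fin n → Fin k,
      (Finset.univ.filter fun ρ : Equiv.Perm (Fin n) => (fun x => g (ρ x)) = q).card
      = if (∀ c, mcard k n q c = mcard k n g c) then ∏ c, (mcard k n g c).factorial else 0 := by
    intro q
    rw [← Fintype.card_subtype, card_perm_comp g q]
    by_cases H : ∀ c, mcard k n q c = mcard k n g c
    · rw [if_pos H, if_pos]
      · rfl
      · exact H
    · rw [if_neg H, if_neg]
      exact H
  have h2 : n.factorial = (Finset.univ : Finset (Equiv.Perm (Fin n))).card := by
    rw [Finset.card_univ, Fintype.card_perm, Fintype.card_fin]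
  rw [h2, h0]
  rw [Finset.sum_congr rfl fun q _ => h1 q]
  rw [Finset.sum_mul]
  refine Finset.sum_congr rfl fun q _ => ?_
  rw [ite_mul, one_mul, zero_mul]

lemma mcard_cons {n k : ℕ} (x : Fin k) (g : Fin n → Fin k) (c : Fin k) :
    mcard k (n + 1) (Fin.cons x g) c = (if x = c then 1 else 0) + mcard k n g c := by
  rw [mcard, Fintype.card_subtype, Finset.card_filter, Fin.sum_univ_succ]
  simp only [Fin.cons_zero, Fin.cons_succ]
  rw [mcard, Fintype.card_subtype, Finset.card_filter]

lemma prod_odf_cons {n k : ℕ} (x : Fin k) (g : Fin n → Fin k) :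
    ∏ c, odf (mcard k (n + 1) (Fin.cons x g) c)
      = (2 * mcard k n g x + 1) * ∏ c, odf (mcard k n g c) := by
  rw [← Finset.mul_prod_erase Finset.univ _ (Finset.mem_univ x),
      ← Finset.mul_prod_erase Finset.univ (fun c => odf (mcard k n g c)) (Finset.mem_univ x)]
  have h1 : mcard k (n + 1) (Fin.cons x g) x = mcard k n g x + 1 := by
    rw [mcard_cons, if_pos rfl, add_comm]
  have h2 : ∀ c ∈ Finset.univ.erase x,
      odf (mcard k (n + 1) (Fin.cons x g) c) = odf (mcard k n g c) := by
    intro c hc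
    rw [mcard_cons, if_neg (Ne.symm (Finset.ne_of_mem_erase hc)), zero_add]
  rw [Finset.prod_congr rfl h2, h1]
  show odf (mcard k n g x + 1) * _ = _
  simp only [odf]
  ring

lemma sum_prod_odf (k : ℕ) : ∀ n : ℕ,
    ∑ g : Fin n → Fin k, ∏ c, odf (mcard k n g c) = ∏ j ∈ Finset.range n, (k + 2 * j) := by
  intro n
  induction n with
  | zero =>
      rw [Finset.range_zero, Finset.prod_empty]
      rw [Fintype.sum_unique]
      have : ∀ c : Fin k, mcard k 0 (default : Fin 0 → Fin k) c = 0 := by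
        intro c
        rw [mcard]
        exact Fintype.card_eq_zero
      simp [this, odf]
  | succ n ih =>
      rw [← Equiv.sum_comp (Fin.consEquiv (fun _ : Fin (n + 1) => Fin k))
        (fun g => ∏ c, odf (mcard k (n + 1) g c)), Fintype.sum_prod_type]
      have hstep : ∀ (x : Fin k) (g : Fin n → Fin k),
          (∏ c, odf (mcard k (n + 1) (Fin.consEquiv (fun _ : Fin (n+1) => Fin k) (x, g)) c))
            = (2 * mcard k n g x + 1) * ∏ c, odf (mcard k n g c) := by
        intro x g
        exact prod_odf_cons x g
      rw [Finset.sum_congr rfl fun x _ => Finset.sum_congr rfl fun g _ => hstep x g]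
      rw [Finset.sum_comm]
      have hrow : ∀ g : Fin n → Fin k,
          ∑ x, (2 * mcard k n g x + 1) * ∏ c, odf (mcard k n g c)
            = (k + 2 * n) * ∏ c, odf (mcard k n g c) := by
        intro g
        rw [← Finset.sum_mul]
        congr 1
        rw [Finset.sum_add_distrib, ← Finset.mul_sum, sum_mcard, Finset.sum_const,
          Finset.card_univ, Fintype.card_fin, smul_eq_mul, mul_one]
        ring
      rw [Finset.sum_congr rfl fun g _ => hrow g, ← Finset.mul_sum, ih,
        Finset.prod_range_succ]
      ring

lemma sum_lift (n k : ℕ) (h : Fin (2 * n) → Fin k) :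
    (∑ f : Fin n → Fin k, if (fun a => f (pairIdx n a)) = h then 1 else 0)
      = if ∀ j, h (lo n j) = h (hi n j) then 1 else 0 := by
  by_cases hc : ∀ j, h (lo n j) = h (hi n j)
  · rw [if_pos hc]
    have key : ∀ f : Fin n → Fin k,
        ((fun a => f (pairIdx n a)) = h) ↔ f = (fun j => h (lo n j)) := by
      intro f
      constructor
      · intro hf
        funext j
        have := congrFun hf (lo n j)
        simpa using this
      · intro hf
        subst hf
        funext a
        show h (lo n (pairIdx n a)) = h a
        rcases lo_or_hi n a with ha | ha
        · conv_rhs => rw [ha]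
        · conv_rhs => rw [ha]
          exact hc (pairIdx n a)
    rw [Finset.sum_congr rfl fun f _ => if_congr (key f) rfl rfl]
    rw [Finset.sum_ite_eq' Finset.univ (fun j => h (lo n j)) (fun _ => 1)]
    simp
  · rw [if_neg hc]
    refine Finset.sum_eq_zero fun f _ => ?_
    rw [if_neg]
    intro hf
    exact hc fun j => by
      rw [← congrFun hf (lo n j), ← congrFun hf (hi n j), pairIdx_lo, pairIdx_hi]

theorem count_main (n k : ℕ) :
    (∑ σ : Equiv.Perm (Fin (2 * n)), ∑ τ : Equiv.Perm (Fin (2 * n)),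
      ∑ f : Fin n → Fin k, ∑ g : Fin n → Fin k,
        if (fun a => f (pairIdx n (σ⁻¹ a))) = (fun a => g (pairIdx n (τ⁻¹ a))) then 1 else 0)
    = (2 * n).factorial * (2 ^ n * (n.factorial * ∏ j ∈ Finset.range n, (k + 2 * j))) := by
  classical
  set G : Equiv.Perm (Fin (2 * n)) → ℕ := fun π =>
    ∑ f : Fin n → Fin k, ∑ g : Fin n → Fin k,
      if (fun b => f (pairIdx n b)) = (fun b => g (pairIdx n (π b))) then 1 else 0 with hG
  have key : ∀ (σ τ : Equiv.Perm (Fin (2 * n))) (f g : Fin n → Fin k),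
      ((fun a => f (pairIdx n (σ⁻¹ a))) = (fun a => g (pairIdx n (τ⁻¹ a))))
      ↔ ((fun b => f (pairIdx n b)) = (fun b => g (pairIdx n ((τ⁻¹ * σ) b)))) := by
    intro σ τ f g
    constructor
    · intro hcond
      funext b
      have := congrFun hcond (σ b)
      simpa [Equiv.Perm.mul_apply] using this
    · intro hcond
      funext a
      have := congrFun hcond (σ⁻¹ a)
      simpa [Equiv.Perm.mul_apply] using this
  have step1 : ∀ σ : Equiv.Perm (Fin (2 * n)),
      (∑ τ : Equiv.Perm (Fin (2 * n)), ∑ f : Fin n → Fin k, ∑ g : Fin n → Fin k,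
        if (fun a => f (pairIdx n (σ⁻¹ a))) = (fun a => g (pairIdx n (τ⁻¹ a))) then 1 else 0)
      = ∑ π : Equiv.Perm (Fin (2 * n)), G π := by
    intro σ
    refine Fintype.sum_equiv ((Equiv.inv _).trans (Equiv.mulRight σ)) _ _ fun τ => ?_
    rw [Finset.sum_congr rfl fun f _ => Finset.sum_congr rfl fun g _ =>
      if_congr (key σ τ f g) rfl rfl]
    simp only [hG, Equiv.trans_apply, Equiv.inv_apply, Equiv.coe_mulRight]
  rw [Finset.sum_congr rfl fun σ _ => step1 σ, Finset.sum_const, Finset.card_univ,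
    Fintype.card_perm, Fintype.card_fin, smul_eq_mul]
  congr 1
  -- now compute ∑ π, G π
  have hGπ : ∀ π : Equiv.Perm (Fin (2 * n)), G π
      = ∑ g : Fin n → Fin k,
          if ∀ j, (fun b => g (pairIdx n (π b))) (lo n j) = (fun b => g (pairIdx n (π b))) (hi n j)
          then 1 else 0 := by
    intro π
    simp only [hG]
    rw [Finset.sum_comm]
    exact Finset.sum_congr rfl fun g _ => sum_lift n k (fun b => g (pairIdx n (π b)))
  rw [Finset.sum_congr rfl fun π _ => hGπ π, Finset.sum_comm]
  have hback : ∀ (g : Fin n → Fin k) (π : Equiv.Perm (Fin (2 * n))),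
      (if ∀ j, (fun b => g (pairIdx n (π b))) (lo n j) = (fun b => g (pairIdx n (π b))) (hi n j)
          then 1 else 0)
      = ∑ q : Fin n → Fin k,
          if (fun a => q (pairIdx n a)) = (fun b => g (pairIdx n (π b))) then 1 else 0 :=
    fun g π => (sum_lift n k (fun b => g (pairIdx n (π b)))).symm
  rw [Finset.sum_congr rfl fun g _ => Finset.sum_congr rfl fun π _ => hback g π]
  rw [Finset.sum_congr rfl fun g _ => Finset.sum_comm]
  -- inner: ∑ π, [q ∘ p = g ∘ p ∘ π] = card of perms
  have hcard : ∀ (g q : Fin n → Fin k),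
      (∑ π : Equiv.Perm (Fin (2 * n)),
        if (fun a => q (pairIdx n a)) = (fun b => g (pairIdx n (π b))) then 1 else 0)
      = if (∀ c, mcard k n q c = mcard k n g c) then ∏ c, (2 * mcard k n g c).factorial else 0 := by
    intro g q
    have hcc := card_perm_comp (fun b => g (pairIdx n b)) (fun a => q (pairIdx n a))
    rw [Finset.sum_congr rfl fun π _ => if_congr (eq_comm) rfl rfl, ← Finset.card_filter,
      ← Fintype.card_subtype]
    rw [hcc]
    have hfib : ∀ (r : Fin n → Fin k) (v : Fin k),
        Fintype.card {x : Fin (2 * n) // r (pairIdx n x) = v} = 2 * mcard k n r v :=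
      fun r v => card_fiber_pair r v
    by_cases H : ∀ c, mcard k n q c = mcard k n g c
    · rw [if_pos, if_pos H]
      · exact Finset.prod_congr rfl fun v _ => by rw [hfib g v]
      · intro v
        rw [hfib q v, hfib g v, H v]
    · rw [if_neg, if_neg H]
      intro Hc
      exact H fun c => by
        have := Hc c
        rw [hfib q c, hfib g c] at this
        omega
  rw [Finset.sum_congr rfl fun g _ => Finset.sum_congr rfl fun q _ => hcard g q]
  -- per g: pull out the product
  have hper : ∀ g : Fin n → Fin k,
      (∑ q : Fin n → Fin k,
        if (∀ c, mcard k n q c = mcard k n g c) then ∏ c, (2 * mcard k n g c).factorial else 0)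
      = n.factorial * 2 ^ n * ∏ c, odf (mcard k n g c) := by
    intro g
    have hpos : 0 < ∏ c, (mcard k n g c).factorial :=
      Finset.prod_pos fun c _ => Nat.factorial_pos _
    apply Nat.eq_of_mul_eq_mul_right hpos
    have expand : (∑ q : Fin n → Fin k,
        if (∀ c, mcard k n q c = mcard k n g c) then ∏ c, (2 * mcard k n g c).factorial else 0)
        = (∑ q : Fin n → Fin k, if (∀ c, mcard k n q c = mcard k n g c) then 1 else 0)
          * ∏ c, (2 * mcard k n g c).factorial := by
      rw [Finset.sum_mul]
      exact Finset.sum_congr rfl fun q _ => by rw [ite_mul, one_mul, zero_mul]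
    rw [expand]
    calc ((∑ q : Fin n → Fin k, if (∀ c, mcard k n q c = mcard k n g c) then 1 else 0)
            * ∏ c, (2 * mcard k n g c).factorial) * ∏ c, (mcard k n g c).factorial
        = ((∑ q : Fin n → Fin k, if (∀ c, mcard k n q c = mcard k n g c) then 1 else 0)
            * ∏ c, (mcard k n g c).factorial) * ∏ c, (2 * mcard k n g c).factorial := by ring
      _ = n.factorial * ∏ c, (2 * mcard k n g c).factorial := by rw [cnt_mul_fact g]
      _ = n.factorial * ∏ c, (2 ^ (mcard k n g c) * (mcard k n g c).factorial
            * odf (mcard k n g c)) := by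
          rw [Finset.prod_congr rfl fun c _ => factorial_two_mul (mcard k n g c)]
      _ = n.factorial * 2 ^ n * (∏ c, odf (mcard k n g c)) * ∏ c, (mcard k n g c).factorial := by
          simp only [Finset.prod_mul_distrib, Finset.prod_pow_eq_pow_sum, sum_mcard]
          ring
      _ = (n.factorial * 2 ^ n * ∏ c, odf (mcard k n g c)) * ∏ c, (mcard k n g c).factorial := by
          ring
  rw [Finset.sum_congr rfl fun g _ => hper g]
  have : ∑ g : Fin n → Fin k, n.factorial * 2 ^ n * ∏ c, odf (mcard k n g c)
      = n.factorial * 2 ^ n * ∑ g : Fin n → Fin k, ∏ c, odf (mcard k n g c) := by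
    rw [Finset.mul_sum]
  rw [this, sum_prod_odf k n]
  ring



/-! ### Real Gaussian moments -/

section RealGaussian

open Real Filter
open scoped NNReal ENNReal

lemma integrable_xexp : MeasureTheory.Integrable (fun x : ℝ => x * rexp (-x ^ 2)) := by
  have h := integrable_mul_exp_neg_mul_sq (b := 1) one_pos
  simpa using h

lemma integrable_x2exp : MeasureTheory.Integrable (fun x : ℝ => x ^ 2 * rexp (-x ^ 2)) := by
  have h := integrable_rpow_mul_exp_neg_mul_sq (b := 1) one_pos (s := 2) (by norm_num)
  have h2 : ∀ x : ℝ, x ^ (2 : ℝ) = x ^ 2 := fun x => by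
    rw [show (2 : ℝ) = ((2 : ℕ) : ℝ) by norm_num, Real.rpow_natCast]
  simpa [h2] using h

lemma hasDeriv_v (x : ℝ) :
    HasDerivAt (fun y : ℝ => -(1 / 2) * rexp (-y ^ 2)) (x * rexp (-x ^ 2)) x := by
  have h1 : HasDerivAt (fun y : ℝ => -y ^ 2) (-(2 * x)) x := by
    exact (hasDerivAt_pow 2 x).neg.congr_deriv (by norm_num)
  have h2 := (Real.hasDerivAt_exp (-x ^ 2)).comp x h1
  have h3 := h2.const_mul (-(1 / 2) : ℝ)
  exact h3.congr_deriv (by ring)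

lemma tendsto_v_top :
    Tendsto (fun y : ℝ => -(1 / 2) * rexp (-y ^ 2)) atTop (nhds 0) := by
  have h1 : Tendsto (fun y : ℝ => -y ^ 2) atTop atBot :=
    tendsto_neg_atTop_atBot.comp (tendsto_pow_atTop (two_ne_zero))
  have h2 : Tendsto (fun y : ℝ => rexp (-y ^ 2)) atTop (nhds 0) :=
    Real.tendsto_exp_atBot.comp h1
  simpa using h2.const_mul (-(1 / 2) : ℝ)

lemma tendsto_v_bot :
    Tendsto (fun y : ℝ => -(1 / 2) * rexp (-y ^ 2)) atBot (nhds 0) := by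
  have h0 : Tendsto (fun y : ℝ => y ^ 2) atBot atTop := by
    have := (tendsto_pow_atTop (two_ne_zero)).comp
      (tendsto_neg_atBot_atTop : Tendsto (fun y : ℝ => -y) atBot atTop)
    simpa [Function.comp_def] using this
  have h1 : Tendsto (fun y : ℝ => -y ^ 2) atBot atBot := by
    have := (tendsto_neg_atTop_atBot : Tendsto (fun y : ℝ => -y) atTop atBot).comp h0
    simpa [Function.comp_def] using this
  have h2 : Tendsto (fun y : ℝ => rexp (-y ^ 2)) atBot (nhds 0) :=
    Real.tendsto_exp_atBot.comp h1
  simpa using h2.const_mul (-(1 / 2) : ℝ)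

lemma int_xexp : (∫ x : ℝ, x * rexp (-x ^ 2)) = 0 := by
  have h := MeasureTheory.integral_of_hasDerivAt_of_tendsto
    (fun x => hasDeriv_v x) integrable_xexp tendsto_v_bot tendsto_v_top
  simpa using h

lemma int_exp : (∫ x : ℝ, rexp (-x ^ 2)) = √π := by
  have h := integral_gaussian 1
  simpa using h

lemma int_x2exp : (∫ x : ℝ, x ^ 2 * rexp (-x ^ 2)) = √π / 2 := by
  have e1 : (fun x : ℝ => x) * (fun x : ℝ => x * rexp (-x ^ 2))
      = fun x : ℝ => x ^ 2 * rexp (-x ^ 2) := by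
    funext x; simp [Pi.mul_apply]; ring
  have e2 : (fun _ : ℝ => (1 : ℝ)) * (fun x : ℝ => -(1 / 2) * rexp (-x ^ 2))
      = fun x : ℝ => -(1 / 2) * rexp (-x ^ 2) := by
    funext x; simp [Pi.mul_apply]
  have e3 : (fun x : ℝ => x) * (fun x : ℝ => -(1 / 2) * rexp (-x ^ 2))
      = fun x : ℝ => -(1 / 2) * (x * rexp (-x ^ 2)) := by
    funext x; simp [Pi.mul_apply]; ring
  have base : MeasureTheory.Integrable (fun x : ℝ => rexp (-x ^ 2)) := by
    simpa using integrable_exp_neg_mul_sq (b := 1) one_pos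
  have h := MeasureTheory.integral_mul_deriv_eq_deriv_mul_of_integrable
    (u := fun x : ℝ => x) (v := fun x : ℝ => -(1 / 2) * rexp (-x ^ 2))
    (u' := fun _ : ℝ => (1 : ℝ)) (v' := fun x : ℝ => x * rexp (-x ^ 2))
    (fun x _ => hasDerivAt_id x) (fun x _ => hasDeriv_v x)
    (by rw [e1]; exact integrable_x2exp)
    (by rw [e2]; exact base.const_mul (-(1/2)))
    (by rw [e3]; exact integrable_xexp.const_mul (-(1/2)))
  -- h : ∫ x * (x * rexp (-x^2)) = - ∫ 1 * (-(1/2) * rexp (-x^2))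
  have lhs : (∫ x : ℝ, x * (x * rexp (-x ^ 2))) = ∫ x : ℝ, x ^ 2 * rexp (-x ^ 2) := by
    refine MeasureTheory.integral_congr_ae (Filter.Eventually.of_forall fun x => ?_)
    ring
  have rhs : (∫ x : ℝ, (1 : ℝ) * (-(1 / 2) * rexp (-x ^ 2))) = -(√π / 2) := by
    have : (∫ x : ℝ, (1 : ℝ) * (-(1 / 2) * rexp (-x ^ 2)))
        = ∫ x : ℝ, (-(1 / 2)) * rexp (-x ^ 2) := by
      refine MeasureTheory.integral_congr_ae (Filter.Eventually.of_forall fun x => ?_)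
      ring
    rw [this, MeasureTheory.integral_const_mul, int_exp]
    ring
  rw [← lhs, h, rhs]
  ring

lemma pdf_eq (x : ℝ) : gaussianPDFReal 0 (1 / 2) x = (√π)⁻¹ * rexp (-x ^ 2) := by
  rw [gaussianPDFReal]
  have hc : ((1 / 2 : ℝ≥0) : ℝ) = 1 / 2 := by norm_num
  rw [hc]
  have h1 : 2 * π * (1 / 2 : ℝ) = π := by ring
  rw [h1]
  congr 1
  rw [sub_zero]
  congr 1
  field_simp

lemma half_ne : (1 / 2 : ℝ≥0) ≠ 0 := by norm_num

lemma integral_stdR (f : ℝ → ℝ) :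
    (∫ x, f x ∂(gaussianReal 0 (1 / 2))) = ∫ x, gaussianPDFReal 0 (1 / 2) x * f x := by
  rw [gaussianReal_of_var_ne_zero 0 half_ne]
  have hm : Measurable fun x => (gaussianPDFReal 0 (1 / 2) x).toNNReal :=
    (measurable_gaussianPDFReal 0 (1 / 2)).real_toNNReal
  rw [show (gaussianPDF 0 (1 / 2))
      = (fun x => (((gaussianPDFReal 0 (1 / 2) x).toNNReal : ℝ≥0) : ℝ≥0∞)) from rfl]
  rw [integral_withDensity_eq_integral_smul hm]
  refine MeasureTheory.integral_congr_ae (Filter.Eventually.of_forall fun x => ?_)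
  simp only [NNReal.smul_def, Real.coe_toNNReal _ (gaussianPDFReal_nonneg 0 (1 / 2) x),
    smul_eq_mul]

lemma integrable_stdR_iff (f : ℝ → ℝ) :
    MeasureTheory.Integrable f (gaussianReal 0 (1 / 2))
      ↔ MeasureTheory.Integrable (fun x => gaussianPDFReal 0 (1 / 2) x * f x) := by
  rw [gaussianReal_of_var_ne_zero 0 half_ne]
  have hm : Measurable fun x => (gaussianPDFReal 0 (1 / 2) x).toNNReal :=
    (measurable_gaussianPDFReal 0 (1 / 2)).real_toNNReal
  rw [show (gaussianPDF 0 (1 / 2))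
      = (fun x => (((gaussianPDFReal 0 (1 / 2) x).toNNReal : ℝ≥0) : ℝ≥0∞)) from rfl]
  rw [integrable_withDensity_iff_integrable_smul hm]
  refine MeasureTheory.integrable_congr (Filter.Eventually.of_forall fun x => ?_)
  simp only [NNReal.smul_def, Real.coe_toNNReal _ (gaussianPDFReal_nonneg 0 (1 / 2) x),
    smul_eq_mul]

lemma sqrtpi_ne : (√π : ℝ) ≠ 0 := by
  positivity

lemma stdR_int_id : MeasureTheory.Integrable (fun x : ℝ => x) (gaussianReal 0 (1 / 2)) := by
  rw [integrable_stdR_iff]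
  refine (integrable_xexp.const_mul ((√π)⁻¹)).congr
    (Filter.Eventually.of_forall fun x => ?_)
  simp only [pdf_eq]
  ring

lemma stdR_int_sq : MeasureTheory.Integrable (fun x : ℝ => x ^ 2) (gaussianReal 0 (1 / 2)) := by
  rw [integrable_stdR_iff]
  refine (integrable_x2exp.const_mul ((√π)⁻¹)).congr
    (Filter.Eventually.of_forall fun x => ?_)
  simp only [pdf_eq]
  ring

lemma stdR_moment1 : (∫ x, x ∂(gaussianReal 0 (1 / 2))) = 0 := by
  rw [integral_stdR]
  have : (∫ x, gaussianPDFReal 0 (1 / 2) x * x)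
      = ∫ x, (√π)⁻¹ * (x * rexp (-x ^ 2)) := by
    refine MeasureTheory.integral_congr_ae (Filter.Eventually.of_forall fun x => ?_)
    simp only [pdf_eq]; ring
  rw [this, MeasureTheory.integral_const_mul, int_xexp, mul_zero]

lemma stdR_moment2 : (∫ x, x ^ 2 ∂(gaussianReal 0 (1 / 2))) = 1 / 2 := by
  rw [integral_stdR]
  have : (∫ x, gaussianPDFReal 0 (1 / 2) x * x ^ 2)
      = ∫ x, (√π)⁻¹ * (x ^ 2 * rexp (-x ^ 2)) := by
    refine MeasureTheory.integral_congr_ae (Filter.Eventually.of_forall fun x => ?_)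
    simp only [pdf_eq]; ring
  rw [this, MeasureTheory.integral_const_mul, int_x2exp]
  field_simp

end RealGaussian


/-! ### Complex Gaussian moments -/

section ComplexGaussian

open Real

lemma map_fst_PG : Measure.map Prod.fst ((gaussianReal 0 (1 / 2)).prod (gaussianReal 0 (1 / 2))) = gaussianReal 0 (1 / 2) := by
  rw [Measure.map_fst_prod]
  simp

lemma map_snd_PG : Measure.map Prod.snd ((gaussianReal 0 (1 / 2)).prod (gaussianReal 0 (1 / 2))) = gaussianReal 0 (1 / 2) := by
  rw [Measure.map_snd_prod]
  simp

lemma int_fst {E : Type*} [NormedAddCommGroup E] [NormedSpace ℝ E] (φ : ℝ → E)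
    (hφ : MeasureTheory.AEStronglyMeasurable φ (gaussianReal 0 (1 / 2))) :
    (∫ p : ℝ × ℝ, φ p.1 ∂((gaussianReal 0 (1 / 2)).prod (gaussianReal 0 (1 / 2)))) = ∫ x, φ x ∂(gaussianReal 0 (1 / 2)) := by
  calc (∫ p : ℝ × ℝ, φ p.1 ∂((gaussianReal 0 (1 / 2)).prod (gaussianReal 0 (1 / 2)))) = ∫ x, φ x ∂(Measure.map Prod.fst ((gaussianReal 0 (1 / 2)).prod (gaussianReal 0 (1 / 2)))) :=
        (integral_map measurable_fst.aemeasurable (by rw [map_fst_PG]; exact hφ)).symm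
    _ = _ := by rw [map_fst_PG]

lemma int_snd {E : Type*} [NormedAddCommGroup E] [NormedSpace ℝ E] (φ : ℝ → E)
    (hφ : MeasureTheory.AEStronglyMeasurable φ (gaussianReal 0 (1 / 2))) :
    (∫ p : ℝ × ℝ, φ p.2 ∂((gaussianReal 0 (1 / 2)).prod (gaussianReal 0 (1 / 2)))) = ∫ x, φ x ∂(gaussianReal 0 (1 / 2)) := by
  calc (∫ p : ℝ × ℝ, φ p.2 ∂((gaussianReal 0 (1 / 2)).prod (gaussianReal 0 (1 / 2)))) = ∫ x, φ x ∂(Measure.map Prod.snd ((gaussianReal 0 (1 / 2)).prod (gaussianReal 0 (1 / 2)))) :=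
        (integral_map measurable_snd.aemeasurable (by rw [map_snd_PG]; exact hφ)).symm
    _ = _ := by rw [map_snd_PG]

lemma integ_fst {E : Type*} [NormedAddCommGroup E] (φ : ℝ → E)
    (hφm : MeasureTheory.AEStronglyMeasurable φ (gaussianReal 0 (1 / 2)))
    (hφ : MeasureTheory.Integrable φ (gaussianReal 0 (1 / 2))) :
    MeasureTheory.Integrable (fun p : ℝ × ℝ => φ p.1) ((gaussianReal 0 (1 / 2)).prod (gaussianReal 0 (1 / 2))) := by
  have h : MeasureTheory.Integrable φ (Measure.map Prod.fst ((gaussianReal 0 (1 / 2)).prod (gaussianReal 0 (1 / 2)))) := by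
    rw [map_fst_PG]; exact hφ
  have := (integrable_map_measure (by rw [map_fst_PG]; exact hφm)
    measurable_fst.aemeasurable).mp h
  simpa [Function.comp_def] using this

lemma integ_snd {E : Type*} [NormedAddCommGroup E] (φ : ℝ → E)
    (hφm : MeasureTheory.AEStronglyMeasurable φ (gaussianReal 0 (1 / 2)))
    (hφ : MeasureTheory.Integrable φ (gaussianReal 0 (1 / 2))) :
    MeasureTheory.Integrable (fun p : ℝ × ℝ => φ p.2) ((gaussianReal 0 (1 / 2)).prod (gaussianReal 0 (1 / 2))) := by
  have h : MeasureTheory.Integrable φ (Measure.map Prod.snd ((gaussianReal 0 (1 / 2)).prod (gaussianReal 0 (1 / 2)))) := by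
    rw [map_snd_PG]; exact hφ
  have := (integrable_map_measure (by rw [map_snd_PG]; exact hφm)
    measurable_snd.aemeasurable).mp h
  simpa [Function.comp_def] using this

lemma std_integral (f : ℂ → ℂ) :
    (∫ z, f z ∂stdComplexGaussian)
      = ∫ p : ℝ × ℝ, f ((p.1 : ℂ) + (p.2 : ℂ) * Complex.I) ∂((gaussianReal 0 (1 / 2)).prod (gaussianReal 0 (1 / 2))) := by
  rw [stdComplexGaussian, MeasureTheory.integral_map_equiv]
  refine MeasureTheory.integral_congr_ae (Filter.Eventually.of_forall fun p => ?_)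
  show f (Complex.measurableEquivRealProd.symm p) = _
  rw [Complex.measurableEquivRealProd_symm_apply, Complex.mk_eq_add_mul_I]

lemma std_integrable_iff (f : ℂ → ℂ) :
    MeasureTheory.Integrable f stdComplexGaussian
      ↔ MeasureTheory.Integrable
          (fun p : ℝ × ℝ => f ((p.1 : ℂ) + (p.2 : ℂ) * Complex.I)) ((gaussianReal 0 (1 / 2)).prod (gaussianReal 0 (1 / 2))) := by
  rw [stdComplexGaussian, MeasureTheory.integrable_map_equiv]
  refine MeasureTheory.integrable_congr (Filter.Eventually.of_forall fun p => ?_)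
  show f (Complex.measurableEquivRealProd.symm p) = _
  rw [Complex.measurableEquivRealProd_symm_apply, Complex.mk_eq_add_mul_I]

lemma asm_ofReal : MeasureTheory.AEStronglyMeasurable (fun x : ℝ => (x : ℂ))
    (gaussianReal 0 (1 / 2)) :=
  Complex.continuous_ofReal.aestronglyMeasurable

lemma asm_ofReal_sq : MeasureTheory.AEStronglyMeasurable (fun x : ℝ => ((x ^ 2 : ℝ) : ℂ))
    (gaussianReal 0 (1 / 2)) :=
  (Complex.continuous_ofReal.comp (continuous_pow 2)).aestronglyMeasurable

lemma int_ofReal_P (f : ℝ → ℝ) :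
    (∫ x, ((f x : ℝ) : ℂ) ∂(gaussianReal 0 (1 / 2)))
      = ((∫ x, f x ∂(gaussianReal 0 (1 / 2)) : ℝ) : ℂ) := integral_ofReal

lemma integ_fst_C : MeasureTheory.Integrable (fun p : ℝ × ℝ => ((p.1 : ℝ) : ℂ)) ((gaussianReal 0 (1 / 2)).prod (gaussianReal 0 (1 / 2))) :=
  integ_fst _ asm_ofReal stdR_int_id.ofReal

lemma integ_snd_C : MeasureTheory.Integrable (fun p : ℝ × ℝ => ((p.2 : ℝ) : ℂ)) ((gaussianReal 0 (1 / 2)).prod (gaussianReal 0 (1 / 2))) :=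
  integ_snd _ asm_ofReal stdR_int_id.ofReal

lemma int_fst_C : (∫ p : ℝ × ℝ, ((p.1 : ℝ) : ℂ) ∂((gaussianReal 0 (1 / 2)).prod (gaussianReal 0 (1 / 2)))) = 0 := by
  rw [int_fst _ asm_ofReal, int_ofReal_P (fun x => x), stdR_moment1, Complex.ofReal_zero]

lemma int_snd_C : (∫ p : ℝ × ℝ, ((p.2 : ℝ) : ℂ) ∂((gaussianReal 0 (1 / 2)).prod (gaussianReal 0 (1 / 2)))) = 0 := by
  rw [int_snd _ asm_ofReal, int_ofReal_P (fun x => x), stdR_moment1, Complex.ofReal_zero]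

lemma cg_integrable_id : MeasureTheory.Integrable (fun z : ℂ => z) stdComplexGaussian := by
  rw [std_integrable_iff]
  exact integ_fst_C.add (integ_snd_C.mul_const Complex.I)

lemma cg_int_id : (∫ z : ℂ, z ∂stdComplexGaussian) = 0 := by
  rw [std_integral]
  rw [MeasureTheory.integral_add integ_fst_C (integ_snd_C.mul_const Complex.I),
    MeasureTheory.integral_mul_const, int_fst_C, int_snd_C]
  simp

lemma cg_integrable_conj :
    MeasureTheory.Integrable (fun z : ℂ => (starRingEnd ℂ) z) stdComplexGaussian := by
  rw [std_integrable_iff]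
  refine (integ_fst_C.add ((integ_snd_C.mul_const Complex.I).neg)).congr
    (Filter.Eventually.of_forall fun p => ?_)
  simp only [Pi.add_apply, Pi.neg_apply, Pi.sub_apply, map_add, _root_.map_mul,
    Complex.conj_ofReal, Complex.conj_I]
  ring

lemma cg_int_conj : (∫ z : ℂ, (starRingEnd ℂ) z ∂stdComplexGaussian) = 0 := by
  rw [integral_conj, cg_int_id, map_zero]

lemma integ_fst_sq_C : MeasureTheory.Integrable (fun p : ℝ × ℝ => ((p.1 ^ 2 : ℝ) : ℂ)) ((gaussianReal 0 (1 / 2)).prod (gaussianReal 0 (1 / 2))) :=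
  integ_fst _ asm_ofReal_sq stdR_int_sq.ofReal

lemma integ_snd_sq_C : MeasureTheory.Integrable (fun p : ℝ × ℝ => ((p.2 ^ 2 : ℝ) : ℂ)) ((gaussianReal 0 (1 / 2)).prod (gaussianReal 0 (1 / 2))) :=
  integ_snd _ asm_ofReal_sq stdR_int_sq.ofReal

lemma cg_integrable_mulconj :
    MeasureTheory.Integrable (fun z : ℂ => z * (starRingEnd ℂ) z) stdComplexGaussian := by
  rw [std_integrable_iff]
  refine (integ_fst_sq_C.add integ_snd_sq_C).congr
    (Filter.Eventually.of_forall fun p => ?_)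
  simp only [Pi.add_apply]
  rw [Complex.mul_conj, Complex.normSq_add_mul_I]
  push_cast
  ring

lemma cg_int_mulconj : (∫ z : ℂ, z * (starRingEnd ℂ) z ∂stdComplexGaussian) = 1 := by
  rw [std_integral]
  have hpt : ∀ p : ℝ × ℝ,
      ((p.1 : ℂ) + (p.2 : ℂ) * Complex.I) * (starRingEnd ℂ) ((p.1 : ℂ) + (p.2 : ℂ) * Complex.I)
      = ((p.1 ^ 2 : ℝ) : ℂ) + ((p.2 ^ 2 : ℝ) : ℂ) := by
    intro p
    rw [Complex.mul_conj, Complex.normSq_add_mul_I]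
    push_cast
    ring
  rw [MeasureTheory.integral_congr_ae (Filter.Eventually.of_forall hpt)]
  rw [MeasureTheory.integral_add integ_fst_sq_C integ_snd_sq_C]
  rw [int_fst _ asm_ofReal_sq, int_snd _ asm_ofReal_sq, int_ofReal_P (fun x => x ^ 2),
    stdR_moment2]
  norm_num

end ComplexGaussian


/-! ### Product integrals over pi measures -/

lemma pi_prod_integral {ι : Type*} [Fintype ι] {X : Type*} [MeasurableSpace X]
    (m : Measure X) [SigmaFinite m] (f : ι → X → ℂ)
    (hf : ∀ i, MeasureTheory.Integrable (f i) m) :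
    MeasureTheory.Integrable (fun x : ι → X => ∏ i, f i (x i)) (Measure.pi fun _ => m) ∧
      (∫ x : ι → X, ∏ i, f i (x i) ∂(Measure.pi fun _ => m)) = ∏ i, ∫ x, f i x ∂m := by
  letI : MeasureSpace X := ⟨m⟩
  exact ⟨MeasureTheory.Integrable.fintype_prod hf,
    MeasureTheory.integral_fintype_prod_eq_prod (μ := fun _ => m) f⟩

/-! ### The key moment computation -/

lemma key_term (n k : ℕ) (R S : Fin (2 * n) → Fin k) :
    MeasureTheory.Integrable
        (fun X : Fin k → Fin (2 * n) → ℂ =>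
          ∏ a, (X (R a) a * (starRingEnd ℂ) (X (S a) a))) (gaussianMatrix k n) ∧
      (∫ X, (∏ a, (X (R a) a * (starRingEnd ℂ) (X (S a) a))) ∂(gaussianMatrix k n))
        = if R = S then 1 else 0 := by
  classical
  set ψ : Fin k → Fin (2 * n) → ℂ → ℂ := fun i a z =>
    (if R a = i then z else 1) * (if S a = i then (starRingEnd ℂ) z else 1) with hψ
  have hψ_int : ∀ i a, MeasureTheory.Integrable (ψ i a) stdComplexGaussian := by
    intro i a
    rcases em (R a = i) with h1 | h1 <;> rcases em (S a = i) with h2 | h2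
    · have h : ψ i a = fun z => z * (starRingEnd ℂ) z := by
        funext z; simp only [hψ]; rw [if_pos h1, if_pos h2]
      rw [h]; exact cg_integrable_mulconj
    · have h : ψ i a = fun z => z := by
        funext z; simp only [hψ]; rw [if_pos h1, if_neg h2, mul_one]
      rw [h]; exact cg_integrable_id
    · have h : ψ i a = fun z => (starRingEnd ℂ) z := by
        funext z; simp only [hψ]; rw [if_neg h1, if_pos h2, one_mul]
      rw [h]; exact cg_integrable_conj
    · have h : ψ i a = fun _ => (1 : ℂ) := by
        funext z; simp only [hψ]; rw [if_neg h1, if_neg h2, mul_one]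
      rw [h]; exact MeasureTheory.integrable_const 1
  have hψ_val_eq : ∀ a, R a = S a → ∀ i, (∫ z, ψ i a z ∂stdComplexGaussian) = 1 := by
    intro a hras i
    rcases em (R a = i) with h1 | h1
    · have h : ψ i a = fun z => z * (starRingEnd ℂ) z := by
        funext z; simp only [hψ]; rw [if_pos h1, if_pos (hras ▸ h1)]
      rw [h]; exact cg_int_mulconj
    · have h : ψ i a = fun _ => (1 : ℂ) := by
        funext z; simp only [hψ]; rw [if_neg h1, if_neg (hras ▸ h1), mul_one]
      rw [h]
      simp
  have hψ_val_ne : ∀ a, R a ≠ S a → (∫ z, ψ (R a) a z ∂stdComplexGaussian) = 0 := by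
    intro a hras
    have h : ψ (R a) a = fun z => z := by
      funext z
      simp only [hψ, if_true]
      rw [if_neg (fun hc => hras hc.symm), mul_one]
    rw [h]; exact cg_int_id
  have hΦ := fun i => pi_prod_integral stdComplexGaussian (fun a => ψ i a) (hψ_int i)
  have houter := pi_prod_integral (Measure.pi fun _ : Fin (2 * n) => stdComplexGaussian)
    (fun i y => ∏ a, ψ i a (y a)) (fun i => (hΦ i).1)
  have hfun : (fun X : Fin k → Fin (2 * n) → ℂ =>
      ∏ a, (X (R a) a * (starRingEnd ℂ) (X (S a) a)))
      = fun X => ∏ i, ∏ a, ψ i a (X i a) := by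
    funext X
    conv_rhs => rw [Finset.prod_comm]
    refine Finset.prod_congr rfl fun a _ => ?_
    have : ∀ i, ψ i a (X i a)
        = (if R a = i then X i a else 1) * (if S a = i then (starRingEnd ℂ) (X i a) else 1) :=
      fun i => rfl
    rw [Finset.prod_congr rfl fun i _ => this i, Finset.prod_mul_distrib]
    congr 1
    · rw [Finset.prod_ite_eq]
      simp
    · rw [Finset.prod_ite_eq]
      simp
  have hmeas : gaussianMatrix k n
      = Measure.pi (fun _ : Fin k => Measure.pi fun _ : Fin (2 * n) => stdComplexGaussian) := rfl
  constructor
  · rw [hfun, hmeas]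
    exact houter.1
  · rw [hfun, hmeas, houter.2, Finset.prod_congr rfl fun i _ => (hΦ i).2, Finset.prod_comm]
    by_cases hRS : R = S
    · rw [if_pos hRS]
      exact Finset.prod_eq_one fun a _ => Finset.prod_eq_one fun i _ =>
        hψ_val_eq a (by rw [hRS]) i
    · rw [if_neg hRS]
      obtain ⟨a, ha⟩ := Function.ne_iff.mp hRS
      refine Finset.prod_eq_zero (Finset.mem_univ a) ?_
      exact Finset.prod_eq_zero (Finset.mem_univ (R a)) (hψ_val_ne a ha)

/-! ### Expansion of the hafnian of `XᵀX` -/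

def rowOf (n k : ℕ) (sf : Equiv.Perm (Fin (2 * n)) × (Fin n → Fin k)) (a : Fin (2 * n)) :
    Fin k :=
  sf.2 (pairIdx n (sf.1⁻¹ a))

lemma haf_expand (n k : ℕ) (X : Fin k → Fin (2 * n) → ℂ) :
    hafnian n ((Matrix.of X)ᵀ * Matrix.of X)
      = (1 / (2 ^ n * n.factorial : ℂ)) *
          ∑ sf : Equiv.Perm (Fin (2 * n)) × (Fin n → Fin k), ∏ a, X (rowOf n k sf a) a := by
  rw [hafnian]
  congr 1
  rw [Fintype.sum_prod_type]
  refine Finset.sum_congr rfl fun σ _ => ?_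
  have hM : ∀ j : Fin n, ((Matrix.of X)ᵀ * Matrix.of X) (σ (lo n j)) (σ (hi n j))
      = ∑ i, X i (σ (lo n j)) * X i (σ (hi n j)) := by
    intro j
    rw [Matrix.mul_apply]
    exact Finset.sum_congr rfl fun i _ => by
      rw [Matrix.transpose_apply, Matrix.of_apply, Matrix.of_apply]
  rw [Finset.prod_congr rfl fun j _ => hM j,
    Fintype.prod_sum (fun j i => X i (σ (lo n j)) * X i (σ (hi n j)))]
  refine Finset.sum_congr rfl fun f _ => ?_
  rw [← Equiv.prod_comp σ (fun a => X (rowOf n k (σ, f) a) a)]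
  rw [prod_pair n (fun b => X (rowOf n k (σ, f) (σ b)) (σ b))]
  refine Finset.prod_congr rfl fun j _ => ?_
  simp only [rowOf, Equiv.Perm.inv_def, Equiv.symm_apply_apply, pairIdx_lo, pairIdx_hi]



/-- For `n, k ≥ 1` and `X` a `k × 2n` matrix of i.i.d. standard complex
Gaussians, `E[|Haf(XᵀX)|²] = ((2n)!/(2^n n!)) · ∏_{j=0}^{n−1} (k + 2j)`. -/
theorem expectation_sq_hafnian (n k : ℕ) (hn : 1 ≤ n) (hk : 1 ≤ k) :
    (∫ X, ‖hafnian n ((Matrix.of X)ᵀ * Matrix.of X)‖ ^ 2 ∂gaussianMatrix k n) =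
      ((2 * n).factorial / (2 ^ n * n.factorial) : ℝ) *
        ∏ j ∈ Finset.range n, ((k : ℝ) + 2 * j) := by

  classical
  have habs : ∀ X : Fin k → Fin (2 * n) → ℂ,
      ‖hafnian n ((Matrix.of X)ᵀ * Matrix.of X)‖ ^ 2
      = (1 / ((2 : ℝ) ^ n * n.factorial)) ^ 2 *
          ((∑ sf : Equiv.Perm (Fin (2 * n)) × (Fin n → Fin k),
            ∑ tg : Equiv.Perm (Fin (2 * n)) × (Fin n → Fin k),
              ∏ a, (X (rowOf n k sf a) a * (starRingEnd ℂ) (X (rowOf n k tg a) a))).re) := by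
    intro X
    rw [haf_expand n k X, norm_mul, mul_pow]
    have hc : ‖(1 / (2 ^ n * (n.factorial : ℂ)))‖
        = 1 / ((2 : ℝ) ^ n * n.factorial) := by
      rw [show ((2 : ℂ) ^ n * (n.factorial : ℂ)) = (((2 : ℝ) ^ n * (n.factorial : ℝ) : ℝ) : ℂ) by
        push_cast; ring]
      rw [norm_div, norm_one, Complex.norm_real, Real.norm_of_nonneg (by positivity)]
    rw [hc]
    congr 1
    have hexp : (∑ sf : Equiv.Perm (Fin (2 * n)) × (Fin n → Fin k),
          ∏ a, X (rowOf n k sf a) a) *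
        (starRingEnd ℂ) (∑ tg : Equiv.Perm (Fin (2 * n)) × (Fin n → Fin k),
          ∏ a, X (rowOf n k tg a) a)
        = ∑ sf : Equiv.Perm (Fin (2 * n)) × (Fin n → Fin k),
            ∑ tg : Equiv.Perm (Fin (2 * n)) × (Fin n → Fin k),
              ∏ a, (X (rowOf n k sf a) a * (starRingEnd ℂ) (X (rowOf n k tg a) a)) := by
      rw [map_sum, Finset.sum_mul_sum]
      refine Finset.sum_congr rfl fun sf _ => Finset.sum_congr rfl fun tg _ => ?_
      rw [map_prod, ← Finset.prod_mul_distrib]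
    rw [← hexp, Complex.mul_conj, Complex.ofReal_re, Complex.sq_norm]
  simp only [habs]
  rw [MeasureTheory.integral_const_mul]
  have hterm := fun (sf tg : Equiv.Perm (Fin (2 * n)) × (Fin n → Fin k)) =>
    key_term n k (rowOf n k sf) (rowOf n k tg)
  have hintsum : MeasureTheory.Integrable
      (fun X : Fin k → Fin (2 * n) → ℂ =>
        ∑ sf : Equiv.Perm (Fin (2 * n)) × (Fin n → Fin k),
          ∑ tg : Equiv.Perm (Fin (2 * n)) × (Fin n → Fin k),
            ∏ a, (X (rowOf n k sf a) a * (starRingEnd ℂ) (X (rowOf n k tg a) a)))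
      (gaussianMatrix k n) :=
    MeasureTheory.integrable_finset_sum _ fun sf _ =>
      MeasureTheory.integrable_finset_sum _ fun tg _ => (hterm sf tg).1
  have hre : (∫ X, ((∑ sf : Equiv.Perm (Fin (2 * n)) × (Fin n → Fin k),
        ∑ tg : Equiv.Perm (Fin (2 * n)) × (Fin n → Fin k),
          ∏ a, (X (rowOf n k sf a) a * (starRingEnd ℂ) (X (rowOf n k tg a) a))).re)
        ∂gaussianMatrix k n)
      = ((∫ X, (∑ sf : Equiv.Perm (Fin (2 * n)) × (Fin n → Fin k),
          ∑ tg : Equiv.Perm (Fin (2 * n)) × (Fin n → Fin k),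
            ∏ a, (X (rowOf n k sf a) a * (starRingEnd ℂ) (X (rowOf n k tg a) a)))
          ∂gaussianMatrix k n)).re := by
    have h := integral_re hintsum
    simpa using h
  rw [hre]
  have hFF : (∫ X, (∑ sf : Equiv.Perm (Fin (2 * n)) × (Fin n → Fin k),
        ∑ tg : Equiv.Perm (Fin (2 * n)) × (Fin n → Fin k),
          ∏ a, (X (rowOf n k sf a) a * (starRingEnd ℂ) (X (rowOf n k tg a) a)))
        ∂gaussianMatrix k n)
      = ∑ sf : Equiv.Perm (Fin (2 * n)) × (Fin n → Fin k),
          ∑ tg : Equiv.Perm (Fin (2 * n)) × (Fin n → Fin k),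
            if rowOf n k sf = rowOf n k tg then (1 : ℂ) else 0 := by
    rw [MeasureTheory.integral_finset_sum _ (fun sf _ =>
      MeasureTheory.integrable_finset_sum _ fun tg _ => (hterm sf tg).1)]
    rw [Finset.sum_congr rfl fun sf _ =>
      MeasureTheory.integral_finset_sum _ fun tg _ => (hterm sf tg).1]
    exact Finset.sum_congr rfl fun sf _ => Finset.sum_congr rfl fun tg _ => (hterm sf tg).2
  rw [hFF]
  have hcast : (∑ sf : Equiv.Perm (Fin (2 * n)) × (Fin n → Fin k),
        ∑ tg : Equiv.Perm (Fin (2 * n)) × (Fin n → Fin k),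
          if rowOf n k sf = rowOf n k tg then (1 : ℂ) else 0)
      = (((∑ sf : Equiv.Perm (Fin (2 * n)) × (Fin n → Fin k),
          ∑ tg : Equiv.Perm (Fin (2 * n)) × (Fin n → Fin k),
            if rowOf n k sf = rowOf n k tg then 1 else 0 : ℕ) : ℂ)) := by
    rw [Nat.cast_sum]
    refine Finset.sum_congr rfl fun sf _ => ?_
    rw [Nat.cast_sum]
    refine Finset.sum_congr rfl fun tg _ => ?_
    rw [apply_ite (Nat.cast : ℕ → ℂ), Nat.cast_one, Nat.cast_zero]
  have hcount : (∑ sf : Equiv.Perm (Fin (2 * n)) × (Fin n → Fin k),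
        ∑ tg : Equiv.Perm (Fin (2 * n)) × (Fin n → Fin k),
          if rowOf n k sf = rowOf n k tg then 1 else 0)
      = (2 * n).factorial * (2 ^ n * (n.factorial * ∏ j ∈ Finset.range n, (k + 2 * j))) := by
    rw [Fintype.sum_prod_type]
    have hinner : ∀ (σ : Equiv.Perm (Fin (2 * n))) (f : Fin n → Fin k),
        (∑ tg : Equiv.Perm (Fin (2 * n)) × (Fin n → Fin k),
          if rowOf n k (σ, f) = rowOf n k tg then 1 else 0)
        = ∑ τ : Equiv.Perm (Fin (2 * n)), ∑ g : Fin n → Fin k,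
            if rowOf n k (σ, f) = rowOf n k (τ, g) then 1 else 0 :=
      fun σ f => by rw [Fintype.sum_prod_type]
    rw [Finset.sum_congr rfl fun σ _ => Finset.sum_congr rfl fun f _ => hinner σ f]
    rw [Finset.sum_congr rfl fun σ _ => Finset.sum_comm]
    have hrow : ∀ (σ : Equiv.Perm (Fin (2 * n))) (f : Fin n → Fin k),
        rowOf n k (σ, f) = fun a => f (pairIdx n (σ⁻¹ a)) := fun σ f => rfl
    simp only [hrow]
    exact count_main n k
  rw [hcast, hcount, Complex.natCast_re]
  have h2 : ((2 : ℝ)) ^ n ≠ 0 := by positivity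
  have h3 : ((n.factorial : ℝ)) ≠ 0 := by positivity
  push_cast
  field_simp


end GBS
end

section
/- For natural numbers k and n ≥ 2, define f(k,n) = ∑_{M} k^{C(G_M)}, the sum over all perfect matchings M of {1,…,2n} of k raised to the number of connected components of G_M. Then f(k,n) = (k + 2n − 2) · f(k, n−1). -/
open scoped BigOperators

namespace GBS

/-- `f(k,n) = ∑_M k^{C(G_M)}`, summing over all perfect matchings of `{1,…,2n}`. -/
noncomputable def matchSum (k n : ℕ) : ℕ :=
  ∑ f : PerfectMatching n, k ^ Nat.card (matchGraph n f.1).ConnectedComponent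

section CompLift

open SimpleGraph

variable {V : Type*} {G : SimpleGraph V}

lemma eq_of_reachable_s4 {β : Sort*} (f : V → β)
    (hf : ∀ v w, G.Adj v w → f v = f w) :
    ∀ v w, G.Reachable v w → f v = f w := by
  intro v w h
  obtain ⟨wk⟩ := h
  induction wk with
  | nil => rfl
  | cons h q ih => exact (hf _ _ h).trans ih

/-- Lift a vertex function constant on edges to connected components. -/
def compLift {β : Sort*} (f : V → β) (hf : ∀ v w, G.Adj v w → f v = f w) :
    G.ConnectedComponent → β :=
  Quot.lift f (eq_of_reachable_s4 f hf)

@[simp] lemma compLift_mk {β : Sort*} (f : V → β) (hf) (v : V) :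
    compLift f hf (G.connectedComponentMk v) = f v := rfl

end CompLift

section Verts

variable {m : ℕ}

def va : Fin (2*(m+1)) := ⟨2*m, by omega⟩
def vb : Fin (2*(m+1)) := ⟨2*m+1, by omega⟩
def up (z : Fin (2*m)) : Fin (2*(m+1)) := ⟨z.1, by omega⟩

@[simp] lemma up_val (z : Fin (2*m)) : ((up z : Fin (2*(m+1))) : ℕ) = (z : ℕ) := rfl
@[simp] lemma va_val : ((va : Fin (2*(m+1))) : ℕ) = 2*m := rfl
@[simp] lemma vb_val : ((vb : Fin (2*(m+1))) : ℕ) = 2*m+1 := rfl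

lemma up_inj {z w : Fin (2*m)} (h : up z = up w) : z = w := by
  have h2' := congrArg Fin.val h
  have h2 : (z : ℕ) = (w : ℕ) := h2'
  exact Fin.ext h2

lemma up_ne_va (z : Fin (2*m)) : up z ≠ va := by
  intro h
  have h2' := congrArg Fin.val h
  have h2 : (z : ℕ) = 2*m := h2'
  have := z.2; omega

lemma up_ne_vb (z : Fin (2*m)) : up z ≠ vb := by
  intro h
  have h2' := congrArg Fin.val h
  have h2 : (z : ℕ) = 2*m+1 := h2'
  have := z.2; omega

lemma va_ne_vb : (va : Fin (2*(m+1))) ≠ vb := by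
  intro h
  have h2' := congrArg Fin.val h
  have h2 : 2*m = 2*m+1 := h2'
  omega

lemma cases₃ (z : Fin (2*(m+1))) : (∃ w, z = up w) ∨ z = va ∨ z = vb := by
  rcases lt_or_ge (z : ℕ) (2*m) with h | h
  · exact Or.inl ⟨⟨z.1, h⟩, Fin.ext rfl⟩
  · have := z.2
    right
    rcases Nat.lt_or_ge (z : ℕ) (2*m+1) with h2 | h2
    · exact Or.inl (Fin.ext (by simp; omega))
    · exact Or.inr (Fin.ext (by simp; omega))

end Verts

section Perms

variable {m : ℕ}

/-- Extend a matching on `Fin (2m)` by the pair `{va, vb}`. -/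
def extFun (g : Equiv.Perm (Fin (2*m))) (z : Fin (2*(m+1))) : Fin (2*(m+1)) :=
  if hz : (z : ℕ) < 2*m then up (g ⟨z.1, hz⟩) else ⟨4*m+1 - z.1, by omega⟩

lemma extFun_up (g : Equiv.Perm (Fin (2*m))) (w : Fin (2*m)) :
    extFun g (up w) = up (g w) := by
  have hw : ((up w : Fin (2*(m+1))) : ℕ) < 2*m := w.2
  rw [extFun, dif_pos hw]
  rfl

lemma extFun_va (g : Equiv.Perm (Fin (2*m))) : extFun g va = vb := by
  rw [extFun, dif_neg (by simp)]
  exact Fin.ext (by simp [vb]; omega)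

lemma extFun_vb (g : Equiv.Perm (Fin (2*m))) : extFun g vb = va := by
  rw [extFun, dif_neg (by simp)]
  exact Fin.ext (by simp [va]; omega)

lemma extFun_invol (g : Equiv.Perm (Fin (2*m))) (hg : ∀ x, g (g x) = x) :
    Function.Involutive (extFun g) := by
  intro z
  rcases cases₃ z with ⟨w, rfl⟩ | rfl | rfl
  · rw [extFun_up, extFun_up, hg]
  · rw [extFun_va, extFun_vb]
  · rw [extFun_vb, extFun_va]

lemma extFun_ne (g : Equiv.Perm (Fin (2*m))) (hg : ∀ x, g x ≠ x) :
    ∀ z, extFun g z ≠ z := by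
  intro z
  rcases cases₃ z with ⟨w, rfl⟩ | rfl | rfl
  · rw [extFun_up]; exact fun h => hg w (up_inj h)
  · rw [extFun_va]; exact fun h => va_ne_vb h.symm
  · rw [extFun_vb]; exact va_ne_vb

def extPerm (g : PerfectMatching m) : PerfectMatching (m+1) :=
  ⟨Function.Involutive.toPerm (extFun g.1) (extFun_invol g.1 g.2.1),
   fun z => extFun_invol g.1 g.2.1 z,
   fun z => extFun_ne g.1 g.2.2 z⟩

@[simp] lemma extPerm_apply (g : PerfectMatching m) (z : Fin (2*(m+1))) :
    (extPerm g).1 z = extFun g.1 z := rfl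

/-- Insert the pair `{va, vb}` into the edge `{x, g x}` of a matching `g`:
new red edges `{va, g x}`, `{vb, x}`. -/
def insFun (x : Fin (2*m)) (g : Equiv.Perm (Fin (2*m))) (z : Fin (2*(m+1))) :
    Fin (2*(m+1)) :=
  if hz : (z : ℕ) < 2*m then
    if (z : ℕ) = (x : ℕ) then vb
    else if (z : ℕ) = ((g x : Fin (2*m)) : ℕ) then va
    else up (g ⟨z.1, hz⟩)
  else if (z : ℕ) = 2*m then up (g x) else up x

lemma insFun_up_x (x : Fin (2*m)) (g : Equiv.Perm (Fin (2*m))) :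
    insFun x g (up x) = vb := by
  have hw : ((up x : Fin (2*(m+1))) : ℕ) < 2*m := x.2
  rw [insFun, dif_pos hw, if_pos (show ((up x : Fin (2*(m+1))) : ℕ) = (x : ℕ) from rfl)]

lemma insFun_up_gx (x : Fin (2*m)) (g : Equiv.Perm (Fin (2*m))) (hne : g x ≠ x) :
    insFun x g (up (g x)) = va := by
  have hw : ((up (g x) : Fin (2*(m+1))) : ℕ) < 2*m := (g x).2
  rw [insFun, dif_pos hw,
    if_neg (show ¬((up (g x) : Fin (2*(m+1))) : ℕ) = (x : ℕ) from fun h => hne (Fin.ext h)),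
    if_pos (show ((up (g x) : Fin (2*(m+1))) : ℕ) = ((g x : Fin (2*m)) : ℕ) from rfl)]

lemma insFun_up_other (x : Fin (2*m)) (g : Equiv.Perm (Fin (2*m))) (w : Fin (2*m))
    (h1 : w ≠ x) (h2 : w ≠ g x) :
    insFun x g (up w) = up (g w) := by
  have hw : ((up w : Fin (2*(m+1))) : ℕ) < 2*m := w.2
  rw [insFun, dif_pos hw,
    if_neg (show ¬((up w : Fin (2*(m+1))) : ℕ) = (x : ℕ) from fun h => h1 (Fin.ext h)),
    if_neg (show ¬((up w : Fin (2*(m+1))) : ℕ) = ((g x : Fin (2*m)) : ℕ) from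
      fun h => h2 (Fin.ext h))]
  rfl

lemma insFun_va (x : Fin (2*m)) (g : Equiv.Perm (Fin (2*m))) :
    insFun x g va = up (g x) := by
  rw [insFun, dif_neg (by simp), if_pos (by simp)]

lemma insFun_vb (x : Fin (2*m)) (g : Equiv.Perm (Fin (2*m))) :
    insFun x g vb = up x := by
  rw [insFun, dif_neg (by simp), if_neg (by simp)]

lemma insFun_invol (x : Fin (2*m)) (g : Equiv.Perm (Fin (2*m)))
    (hg : ∀ y, g (g y) = y) (hg2 : ∀ y, g y ≠ y) :
    Function.Involutive (insFun x g) := by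
  intro z
  rcases cases₃ z with ⟨w, rfl⟩ | rfl | rfl
  · by_cases h1 : w = x
    · subst h1; rw [insFun_up_x, insFun_vb]
    · by_cases h2 : w = g x
      · subst h2; rw [insFun_up_gx x g (hg2 x), insFun_va]
      · rw [insFun_up_other x g w h1 h2,
          insFun_up_other x g (g w) (fun h => h2 (by rw [← h, hg]))
            (fun h => h1 (g.injective h)), hg]
  · rw [insFun_va, insFun_up_gx x g (hg2 x)]
  · rw [insFun_vb, insFun_up_x]

lemma insFun_ne (x : Fin (2*m)) (g : Equiv.Perm (Fin (2*m)))
    (hg2 : ∀ y, g y ≠ y) : ∀ z, insFun x g z ≠ z := by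
  intro z
  rcases cases₃ z with ⟨w, rfl⟩ | rfl | rfl
  · by_cases h1 : w = x
    · subst h1; rw [insFun_up_x]; exact fun h => up_ne_vb w h.symm
    · by_cases h2 : w = g x
      · subst h2; rw [insFun_up_gx x g (hg2 x)]
        exact fun h => up_ne_va (g x) h.symm
      · rw [insFun_up_other x g w h1 h2]
        exact fun h => hg2 w (up_inj h)
  · rw [insFun_va]; exact up_ne_va (g x)
  · rw [insFun_vb]; exact up_ne_vb x

def insPerm (x : Fin (2*m)) (g : PerfectMatching m) : PerfectMatching (m+1) :=
  ⟨Function.Involutive.toPerm (insFun x g.1) (insFun_invol x g.1 g.2.1 g.2.2),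
   fun z => insFun_invol x g.1 g.2.1 g.2.2 z,
   fun z => insFun_ne x g.1 g.2.2 z⟩

@[simp] lemma insPerm_apply (x : Fin (2*m)) (g : PerfectMatching m) (z : Fin (2*(m+1))) :
    (insPerm x g).1 z = insFun x g.1 z := rfl

end Perms

section Components

open SimpleGraph

variable {m : ℕ}

lemma adj_ab (f : Equiv.Perm (Fin (2*(m+1)))) : (matchGraph (m+1) f).Adj va vb := by
  refine ⟨va_ne_vb, Or.inl ?_⟩
  simp only [va_val, vb_val]
  omega

lemma black_not_mixed {w : Fin (2*m)} {z : Fin (2*(m+1))}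
    (h : ((up w : Fin (2*(m+1))) : ℕ)/2 = (z : ℕ)/2) (hz : ¬ (z : ℕ) < 2*m) : False := by
  have h1 := w.2
  have h2 := z.2
  simp only [up_val] at h
  omega

/-- The function splitting vertices of the extended graph. -/
def extSplit (g : PerfectMatching m) (z : Fin (2*(m+1))) :
    (matchGraph m g.1).ConnectedComponent ⊕ Unit :=
  if hz : (z : ℕ) < 2*m then
    Sum.inl ((matchGraph m g.1).connectedComponentMk ⟨z.1, hz⟩)
  else Sum.inr ()

lemma extSplit_up (g : PerfectMatching m) (w : Fin (2*m)) :
    extSplit g (up w) = Sum.inl ((matchGraph m g.1).connectedComponentMk w) := by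
  rw [extSplit, dif_pos (show ((up w : Fin (2*(m+1))) : ℕ) < 2*m from w.2)]
  rfl

lemma extSplit_va (g : PerfectMatching m) : extSplit g va = Sum.inr () := by
  rw [extSplit, dif_neg (by simp)]

lemma extSplit_vb (g : PerfectMatching m) : extSplit g vb = Sum.inr () := by
  rw [extSplit, dif_neg (by simp)]

lemma extSplit_red (g : PerfectMatching m) (u v : Fin (2*(m+1)))
    (hr : (extPerm g).1 u = v) : extSplit g u = extSplit g v := by
  rw [extPerm_apply] at hr
  rcases cases₃ u with ⟨w, rfl⟩ | rfl | rfl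
  · rw [extFun_up] at hr
    subst hr
    rw [extSplit_up, extSplit_up]
    refine congrArg Sum.inl (ConnectedComponent.connectedComponentMk_eq_of_adj ?_)
    exact ⟨fun h => g.2.2 w h.symm, Or.inr (Or.inl rfl)⟩
  · rw [extFun_va] at hr
    subst hr
    rw [extSplit_va, extSplit_vb]
  · rw [extFun_vb] at hr
    subst hr
    rw [extSplit_vb, extSplit_va]

lemma extSplit_black (g : PerfectMatching m) (u v : Fin (2*(m+1)))
    (hne : u ≠ v) (hb : (u : ℕ)/2 = (v : ℕ)/2) : extSplit g u = extSplit g v := by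
  by_cases hu : (u : ℕ) < 2*m
  · by_cases hv : (v : ℕ) < 2*m
    · rw [extSplit, extSplit, dif_pos hu, dif_pos hv]
      refine congrArg Sum.inl (ConnectedComponent.connectedComponentMk_eq_of_adj ?_)
      refine ⟨fun h => hne ?_, Or.inl hb⟩
      have h2 := congrArg Fin.val h
      exact Fin.ext h2
    · exfalso
      have h1 := u.2
      have h2 := v.2
      omega
  · by_cases hv : (v : ℕ) < 2*m
    · exfalso
      have h1 := u.2
      have h2 := v.2
      omega
    · rw [extSplit, extSplit, dif_neg hu, dif_neg hv]

lemma extSplit_const (g : PerfectMatching m) :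
    ∀ u v, (matchGraph (m+1) (extPerm g).1).Adj u v → extSplit g u = extSplit g v := by
  rintro u v ⟨hne, hb | hr | hr⟩
  · exact extSplit_black g u v hne hb
  · exact extSplit_red g u v hr
  · exact (extSplit_red g v u hr).symm

lemma extUp_const (g : PerfectMatching m) :
    ∀ w w', (matchGraph m g.1).Adj w w' →
      (matchGraph (m+1) (extPerm g).1).connectedComponentMk (up w) =
        (matchGraph (m+1) (extPerm g).1).connectedComponentMk (up w') := by
  have key : ∀ w w', g.1 w = w' →
      (matchGraph (m+1) (extPerm g).1).connectedComponentMk (up w) =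
        (matchGraph (m+1) (extPerm g).1).connectedComponentMk (up w') := by
    intro w w' hr
    refine ConnectedComponent.connectedComponentMk_eq_of_adj
      ⟨fun h => g.2.2 w (hr ▸ (up_inj h)).symm, Or.inr (Or.inl ?_)⟩
    rw [extPerm_apply, extFun_up, hr]
  rintro w w' ⟨hne, hb | hr | hr⟩
  · exact ConnectedComponent.connectedComponentMk_eq_of_adj
      ⟨fun h => hne (up_inj h), Or.inl hb⟩
  · exact key w w' hr
  · exact (key w' w hr).symm

noncomputable def extEquiv (g : PerfectMatching m) :
    (matchGraph (m+1) (extPerm g).1).ConnectedComponent ≃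
      ((matchGraph m g.1).ConnectedComponent ⊕ Unit) where
  toFun := compLift (extSplit g) (extSplit_const g)
  invFun := Sum.elim
    (compLift (fun w => (matchGraph (m+1) (extPerm g).1).connectedComponentMk (up w))
      (extUp_const g))
    (fun _ => (matchGraph (m+1) (extPerm g).1).connectedComponentMk va)
  left_inv := by
    apply ConnectedComponent.ind
    intro z
    rcases cases₃ z with ⟨w, rfl⟩ | rfl | rfl
    · rw [compLift_mk, extSplit_up]
      rfl
    · rw [compLift_mk, extSplit_va]
      rfl
    · rw [compLift_mk, extSplit_vb]
      exact ConnectedComponent.sound (adj_ab _).reachable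
  right_inv := by
    rintro (c | ⟨⟩)
    · induction c using SimpleGraph.ConnectedComponent.ind with
      | _ w =>
        show compLift (extSplit g) (extSplit_const g)
          ((matchGraph (m+1) (extPerm g).1).connectedComponentMk (up w)) = _
        rw [compLift_mk, extSplit_up]
    · show compLift (extSplit g) (extSplit_const g)
        ((matchGraph (m+1) (extPerm g).1).connectedComponentMk va) = _
      rw [compLift_mk, extSplit_va]

lemma card_ext (g : PerfectMatching m) :
    Nat.card (matchGraph (m+1) (extPerm g).1).ConnectedComponent =
      Nat.card (matchGraph m g.1).ConnectedComponent + 1 := by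
  haveI : Finite (matchGraph m g.1).ConnectedComponent :=
    Finite.of_surjective _ Quot.mk_surjective
  haveI : Finite (matchGraph (m+1) (extPerm g).1).ConnectedComponent :=
    Finite.of_surjective _ Quot.mk_surjective
  rw [Nat.card_congr (extEquiv g), Nat.card_sum,
    show Nat.card Unit = 1 from Nat.card_unique]

end Components

section InsComponents

open SimpleGraph

variable {m : ℕ}

/-- Projection of vertices of the inserted graph to `Fin (2m)`: `va, vb ↦ g x`. -/
def insProj (x : Fin (2*m)) (g : PerfectMatching m) (z : Fin (2*(m+1))) : Fin (2*m) :=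
  if hz : (z : ℕ) < 2*m then ⟨z.1, hz⟩ else g.1 x

lemma insProj_up (x : Fin (2*m)) (g : PerfectMatching m) (w : Fin (2*m)) :
    insProj x g (up w) = w := by
  rw [insProj, dif_pos (show ((up w : Fin (2*(m+1))) : ℕ) < 2*m from w.2)]
  rfl

lemma insProj_va (x : Fin (2*m)) (g : PerfectMatching m) :
    insProj x g va = g.1 x := by
  rw [insProj, dif_neg (by simp)]

lemma insProj_vb (x : Fin (2*m)) (g : PerfectMatching m) :
    insProj x g vb = g.1 x := by
  rw [insProj, dif_neg (by simp)]

lemma insProj_red (x : Fin (2*m)) (g : PerfectMatching m) (u v : Fin (2*(m+1)))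
    (hr : (insPerm x g).1 u = v) :
    (matchGraph m g.1).connectedComponentMk (insProj x g u) =
      (matchGraph m g.1).connectedComponentMk (insProj x g v) := by
  rw [insPerm_apply] at hr
  rcases cases₃ u with ⟨w, rfl⟩ | rfl | rfl
  · by_cases h1 : w = x
    · subst h1
      rw [insFun_up_x] at hr
      subst hr
      rw [insProj_up, insProj_vb]
      exact ConnectedComponent.connectedComponentMk_eq_of_adj
        ⟨fun h => g.2.2 w h.symm, Or.inr (Or.inl rfl)⟩
    · by_cases h2 : w = g.1 x
      · subst h2
        rw [insFun_up_gx x g.1 (g.2.2 x)] at hr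
        subst hr
        rw [insProj_up, insProj_va]
      · rw [insFun_up_other x g.1 w h1 h2] at hr
        subst hr
        rw [insProj_up, insProj_up]
        exact ConnectedComponent.connectedComponentMk_eq_of_adj
          ⟨fun h => g.2.2 w h.symm, Or.inr (Or.inl rfl)⟩
  · rw [insFun_va] at hr
    subst hr
    rw [insProj_va, insProj_up]
  · rw [insFun_vb] at hr
    subst hr
    rw [insProj_vb, insProj_up]
    exact ConnectedComponent.connectedComponentMk_eq_of_adj
      ⟨g.2.2 x, Or.inr (Or.inl (g.2.1 x))⟩

lemma insProj_const (x : Fin (2*m)) (g : PerfectMatching m) :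
    ∀ u v, (matchGraph (m+1) (insPerm x g).1).Adj u v →
      (matchGraph m g.1).connectedComponentMk (insProj x g u) =
        (matchGraph m g.1).connectedComponentMk (insProj x g v) := by
  rintro u v ⟨hne, hb | hr | hr⟩
  · by_cases hu : (u : ℕ) < 2*m
    · by_cases hv : (v : ℕ) < 2*m
      · rw [insProj, insProj, dif_pos hu, dif_pos hv]
        refine ConnectedComponent.connectedComponentMk_eq_of_adj ⟨fun h => hne ?_, Or.inl hb⟩
        have h2 := congrArg Fin.val h
        exact Fin.ext h2
      · exfalso; have h1 := u.2; have h2 := v.2; omega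
    · by_cases hv : (v : ℕ) < 2*m
      · exfalso; have h1 := u.2; have h2 := v.2; omega
      · rw [insProj, insProj, dif_neg hu, dif_neg hv]
  · exact insProj_red x g u v hr
  · exact (insProj_red x g v u hr).symm

/-- The key path `up x — vb — va — up (g x)` in the inserted graph. -/
lemma ins_path (x : Fin (2*m)) (g : PerfectMatching m) :
    (matchGraph (m+1) (insPerm x g).1).connectedComponentMk (up x) =
      (matchGraph (m+1) (insPerm x g).1).connectedComponentMk (up (g.1 x)) := by
  have h1 : (matchGraph (m+1) (insPerm x g).1).Adj (up x) vb :=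
    ⟨up_ne_vb x, Or.inr (Or.inl (by rw [insPerm_apply, insFun_up_x]))⟩
  have h2 : (matchGraph (m+1) (insPerm x g).1).Adj vb va := (adj_ab _).symm
  have h3 : (matchGraph (m+1) (insPerm x g).1).Adj va (up (g.1 x)) :=
    ⟨fun h => up_ne_va (g.1 x) h.symm, Or.inr (Or.inl (by rw [insPerm_apply, insFun_va]))⟩
  exact ((ConnectedComponent.connectedComponentMk_eq_of_adj h1).trans
    (ConnectedComponent.connectedComponentMk_eq_of_adj h2)).trans
    (ConnectedComponent.connectedComponentMk_eq_of_adj h3)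

lemma ins_va_eq (x : Fin (2*m)) (g : PerfectMatching m) :
    (matchGraph (m+1) (insPerm x g).1).connectedComponentMk va =
      (matchGraph (m+1) (insPerm x g).1).connectedComponentMk (up (g.1 x)) :=
  ConnectedComponent.connectedComponentMk_eq_of_adj
    ⟨fun h => up_ne_va (g.1 x) h.symm, Or.inr (Or.inl (by rw [insPerm_apply, insFun_va]))⟩

lemma ins_vb_eq (x : Fin (2*m)) (g : PerfectMatching m) :
    (matchGraph (m+1) (insPerm x g).1).connectedComponentMk vb =
      (matchGraph (m+1) (insPerm x g).1).connectedComponentMk (up (g.1 x)) :=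
  (ConnectedComponent.connectedComponentMk_eq_of_adj (adj_ab _).symm).trans (ins_va_eq x g)

lemma insUp_const (x : Fin (2*m)) (g : PerfectMatching m) :
    ∀ w w', (matchGraph m g.1).Adj w w' →
      (matchGraph (m+1) (insPerm x g).1).connectedComponentMk (up w) =
        (matchGraph (m+1) (insPerm x g).1).connectedComponentMk (up w') := by
  have key : ∀ w w', g.1 w = w' →
      (matchGraph (m+1) (insPerm x g).1).connectedComponentMk (up w) =
        (matchGraph (m+1) (insPerm x g).1).connectedComponentMk (up w') := by
    intro w w' hr
    by_cases h1 : w = x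
    · subst hr
      rw [h1]
      exact ins_path x g
    · by_cases h2 : w = g.1 x
      · subst h2
        rw [g.2.1 x] at hr
        subst hr
        exact (ins_path x g).symm
      · subst hr
        refine ConnectedComponent.connectedComponentMk_eq_of_adj
          ⟨fun h => g.2.2 w (up_inj h).symm, Or.inr (Or.inl ?_)⟩
        rw [insPerm_apply, insFun_up_other x g.1 w h1 h2]
  rintro w w' ⟨hne, hb | hr | hr⟩
  · exact ConnectedComponent.connectedComponentMk_eq_of_adj
      ⟨fun h => hne (up_inj h), Or.inl hb⟩
  · exact key w w' hr
  · exact (key w' w hr).symm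

noncomputable def insEquiv (x : Fin (2*m)) (g : PerfectMatching m) :
    (matchGraph (m+1) (insPerm x g).1).ConnectedComponent ≃
      (matchGraph m g.1).ConnectedComponent where
  toFun := compLift (fun z => (matchGraph m g.1).connectedComponentMk (insProj x g z))
    (insProj_const x g)
  invFun := compLift
    (fun w => (matchGraph (m+1) (insPerm x g).1).connectedComponentMk (up w))
    (insUp_const x g)
  left_inv := by
    apply ConnectedComponent.ind
    intro z
    rcases cases₃ z with ⟨w, rfl⟩ | rfl | rfl
    · rw [compLift_mk, insProj_up, compLift_mk]
    · rw [compLift_mk, insProj_va, compLift_mk]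
      exact (ins_va_eq x g).symm
    · rw [compLift_mk, insProj_vb, compLift_mk]
      exact (ins_vb_eq x g).symm
  right_inv := by
    apply ConnectedComponent.ind
    intro w
    rw [compLift_mk, compLift_mk, insProj_up]

lemma card_ins (x : Fin (2*m)) (g : PerfectMatching m) :
    Nat.card (matchGraph (m+1) (insPerm x g).1).ConnectedComponent =
      Nat.card (matchGraph m g.1).ConnectedComponent :=
  Nat.card_congr (insEquiv x g)

end InsComponents

section Bij

variable {m : ℕ}

/-- The decomposition map: a matching on `2(m+1)` points is either a matching on `2m` points
together with the extra pair, or a matching on `2m` points with the extra pair inserted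
into one of its edges (pointed at `x`, the partner of `vb`). -/
def dec (s : PerfectMatching m ⊕ Fin (2*m) × PerfectMatching m) : PerfectMatching (m+1) :=
  Sum.elim extPerm (fun p => insPerm p.1 p.2) s

lemma dec_inj : Function.Injective (dec (m := m)) := by
  rintro (g₁ | ⟨x₁, g₁⟩) (g₂ | ⟨x₂, g₂⟩) h
  · have happ : ∀ z, extFun g₁.1 z = extFun g₂.1 z :=
      fun z => congrArg (fun t : PerfectMatching (m+1) => t.1 z) h
    refine congrArg Sum.inl (Subtype.ext (Equiv.ext fun w => ?_))
    have h2 := happ (up w)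
    rw [extFun_up, extFun_up] at h2
    exact up_inj h2
  · exfalso
    have happ : extFun g₁.1 vb = insFun x₂ g₂.1 vb :=
      congrArg (fun t : PerfectMatching (m+1) => t.1 vb) h
    rw [extFun_vb, insFun_vb] at happ
    exact up_ne_va x₂ happ.symm
  · exfalso
    have happ : insFun x₁ g₁.1 vb = extFun g₂.1 vb :=
      congrArg (fun t : PerfectMatching (m+1) => t.1 vb) h
    rw [extFun_vb, insFun_vb] at happ
    exact up_ne_va x₁ happ
  · have happ : ∀ z, insFun x₁ g₁.1 z = insFun x₂ g₂.1 z :=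
      fun z => congrArg (fun t : PerfectMatching (m+1) => t.1 z) h
    have hx : x₁ = x₂ := by
      have h2 := happ vb
      rw [insFun_vb, insFun_vb] at h2
      exact up_inj h2
    subst hx
    have hgx : g₁.1 x₁ = g₂.1 x₁ := by
      have h2 := happ va
      rw [insFun_va, insFun_va] at h2
      exact up_inj h2
    refine congrArg Sum.inr (congrArg (Prod.mk x₁) (Subtype.ext (Equiv.ext fun w => ?_)))
    by_cases h1 : w = x₁
    · rw [h1, hgx]
    · by_cases h2 : w = g₁.1 x₁
      · rw [h2, g₁.2.1 x₁, hgx, g₂.2.1 x₁]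
      · have h2' : w ≠ g₂.1 x₁ := fun hh => h2 (hh.trans hgx.symm)
        have h3 := happ (up w)
        rw [insFun_up_other x₁ g₁.1 w h1 h2, insFun_up_other x₁ g₂.1 w h1 h2'] at h3
        exact up_inj h3

section Res

variable (f : PerfectMatching (m+1))

lemma fix_va (h : f.1 vb = va) : f.1 va = vb := by
  have h2 := f.2.1 vb
  rw [h] at h2
  exact h2

lemma res_bound (h : f.1 vb = va) (w : Fin (2*m)) : ((f.1 (up w)) : ℕ) < 2*m := by
  have e1 : f.1 (up w) ≠ va := by
    intro hh
    have h2 := f.2.1 (up w)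
    rw [hh, fix_va f h] at h2
    exact up_ne_vb w h2.symm
  have e2 : f.1 (up w) ≠ vb := by
    intro hh
    have h2 := f.2.1 (up w)
    rw [hh, h] at h2
    exact up_ne_va w h2.symm
  have v1 : ((f.1 (up w)) : ℕ) ≠ 2*m := fun hv => e1 (Fin.ext hv)
  have v2 : ((f.1 (up w)) : ℕ) ≠ 2*m+1 := fun hv => e2 (Fin.ext hv)
  have v3 := (f.1 (up w)).2
  omega

def resFun (h : f.1 vb = va) (w : Fin (2*m)) : Fin (2*m) :=
  ⟨(f.1 (up w)).1, res_bound f h w⟩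

lemma up_resFun (h : f.1 vb = va) (w : Fin (2*m)) : up (resFun f h w) = f.1 (up w) :=
  Fin.ext rfl

lemma resFun_invol (h : f.1 vb = va) : Function.Involutive (resFun f h) := by
  intro w
  have : (f.1 (up (resFun f h w))).1 = (w : ℕ) := by
    rw [up_resFun]
    exact congrArg Fin.val (f.2.1 (up w))
  exact Fin.ext this

lemma resFun_ne (h : f.1 vb = va) : ∀ w, resFun f h w ≠ w := by
  intro w hw
  have h2 : f.1 (up w) = up w := by
    rw [← up_resFun f h w, hw]
  exact f.2.2 (up w) h2

def resPM (h : f.1 vb = va) : PerfectMatching m :=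
  ⟨Function.Involutive.toPerm (resFun f h) (resFun_invol f h),
   fun w => resFun_invol f h w, fun w => resFun_ne f h w⟩

lemma dec_res (h : f.1 vb = va) : dec (Sum.inl (resPM f h)) = f := by
  refine Subtype.ext (Equiv.ext fun z => ?_)
  show extFun (resPM f h).1 z = f.1 z
  rcases cases₃ z with ⟨w, rfl⟩ | rfl | rfl
  · rw [extFun_up]
    exact up_resFun f h w
  · rw [extFun_va, fix_va f h]
  · rw [extFun_vb, h]

end Res

section Rer

variable (f : PerfectMatching (m+1))

lemma rer_bva (h : f.1 vb ≠ va) : ((f.1 va) : ℕ) < 2*m := by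
  have e1 : f.1 va ≠ va := f.2.2 va
  have e2 : f.1 va ≠ vb := by
    intro hh
    have h2 := f.2.1 va
    rw [hh] at h2
    exact h (h2)
  have v1 : ((f.1 va) : ℕ) ≠ 2*m := fun hv => e1 (Fin.ext hv)
  have v2 : ((f.1 va) : ℕ) ≠ 2*m+1 := fun hv => e2 (Fin.ext hv)
  have v3 := (f.1 va).2
  omega

lemma rer_bvb (h : f.1 vb ≠ va) : ((f.1 vb) : ℕ) < 2*m := by
  have e1 : f.1 vb ≠ vb := f.2.2 vb
  have v1 : ((f.1 vb) : ℕ) ≠ 2*m := fun hv => h (Fin.ext hv)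
  have v2 : ((f.1 vb) : ℕ) ≠ 2*m+1 := fun hv => e1 (Fin.ext hv)
  have v3 := (f.1 vb).2
  omega

lemma rer_bup (w : Fin (2*m)) (h1 : up w ≠ f.1 va) (h2 : up w ≠ f.1 vb) :
    ((f.1 (up w)) : ℕ) < 2*m := by
  have e1 : f.1 (up w) ≠ va := by
    intro hh
    apply h1
    have h3 := f.2.1 (up w)
    rw [hh] at h3
    exact h3.symm
  have e2 : f.1 (up w) ≠ vb := by
    intro hh
    apply h2
    have h3 := f.2.1 (up w)
    rw [hh] at h3
    exact h3.symm
  have v1 : ((f.1 (up w)) : ℕ) ≠ 2*m := fun hv => e1 (Fin.ext hv)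
  have v2 : ((f.1 (up w)) : ℕ) ≠ 2*m+1 := fun hv => e2 (Fin.ext hv)
  have v3 := (f.1 (up w)).2
  omega

def xof (h : f.1 vb ≠ va) : Fin (2*m) := ⟨(f.1 vb).1, rer_bvb f h⟩

lemma up_xof (h : f.1 vb ≠ va) : up (xof f h) = f.1 vb := Fin.ext rfl

def rerFun (h : f.1 vb ≠ va) (w : Fin (2*m)) : Fin (2*m) :=
  if h1 : up w = f.1 vb then ⟨(f.1 va).1, rer_bva f h⟩
  else if h2 : up w = f.1 va then ⟨(f.1 vb).1, rer_bvb f h⟩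
  else ⟨(f.1 (up w)).1, rer_bup f w h2 h1⟩

end Rer

end Bij

section Rer2

variable {m : ℕ} (f : PerfectMatching (m+1))

lemma up_rerFun_fb (h : f.1 vb ≠ va) (w : Fin (2*m)) (h1 : up w = f.1 vb) :
    up (rerFun f h w) = f.1 va := by
  rw [rerFun, dif_pos h1]
  exact Fin.ext rfl

lemma up_rerFun_fa (h : f.1 vb ≠ va) (w : Fin (2*m)) (h1 : up w ≠ f.1 vb)
    (h2 : up w = f.1 va) : up (rerFun f h w) = f.1 vb := by
  rw [rerFun, dif_neg h1, dif_pos h2]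
  exact Fin.ext rfl

lemma up_rerFun_other (h : f.1 vb ≠ va) (w : Fin (2*m)) (h1 : up w ≠ f.1 vb)
    (h2 : up w ≠ f.1 va) : up (rerFun f h w) = f.1 (up w) := by
  rw [rerFun, dif_neg h1, dif_neg h2]
  exact Fin.ext rfl

lemma rerFun_invol (h : f.1 vb ≠ va) : Function.Involutive (rerFun f h) := by
  intro w
  by_cases h1 : up w = f.1 vb
  · have e1 := up_rerFun_fb f h w h1
    have hne : up (rerFun f h w) ≠ f.1 vb := by
      rw [e1]
      intro hh
      exact va_ne_vb (f.1.injective hh)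
    have e2 := up_rerFun_fa f h (rerFun f h w) hne e1
    apply up_inj
    rw [e2, ← h1]
  · by_cases h2 : up w = f.1 va
    · have e1 := up_rerFun_fa f h w h1 h2
      have e2 := up_rerFun_fb f h (rerFun f h w) e1
      apply up_inj
      rw [e2, ← h2]
    · have e1 := up_rerFun_other f h w h1 h2
      have hn1 : up (rerFun f h w) ≠ f.1 vb := by
        rw [e1]
        intro hh
        exact up_ne_vb w (f.1.injective hh)
      have hn2 : up (rerFun f h w) ≠ f.1 va := by
        rw [e1]
        intro hh
        exact up_ne_va w (f.1.injective hh)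
      apply up_inj
      rw [up_rerFun_other f h (rerFun f h w) hn1 hn2, e1, f.2.1]

lemma rerFun_ne (h : f.1 vb ≠ va) : ∀ w, rerFun f h w ≠ w := by
  intro w hw
  by_cases h1 : up w = f.1 vb
  · have e1 := up_rerFun_fb f h w h1
    rw [hw, h1] at e1
    exact va_ne_vb (f.1.injective e1.symm)
  · by_cases h2 : up w = f.1 va
    · have e1 := up_rerFun_fa f h w h1 h2
      rw [hw] at e1
      exact h1 e1
    · have e1 := up_rerFun_other f h w h1 h2
      rw [hw] at e1
      exact f.2.2 (up w) e1.symm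

def rerPM (h : f.1 vb ≠ va) : PerfectMatching m :=
  ⟨Function.Involutive.toPerm (rerFun f h) (rerFun_invol f h),
   fun w => rerFun_invol f h w, fun w => rerFun_ne f h w⟩

lemma dec_rer (h : f.1 vb ≠ va) : dec (Sum.inr (xof f h, rerPM f h)) = f := by
  refine Subtype.ext (Equiv.ext fun z => ?_)
  show insFun (xof f h) (rerPM f h).1 z = f.1 z
  have hx : up (xof f h) = f.1 vb := up_xof f h
  have hgx : up ((rerPM f h).1 (xof f h)) = f.1 va := up_rerFun_fb f h _ hx
  rcases cases₃ z with ⟨w, rfl⟩ | rfl | rfl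
  · by_cases h1 : w = xof f h
    · rw [h1, insFun_up_x, hx, f.2.1]
    · by_cases h2 : w = (rerPM f h).1 (xof f h)
      · rw [h2, insFun_up_gx (xof f h) (rerPM f h).1 ((rerPM f h).2.2 (xof f h)), hgx, f.2.1]
      · have hne2 : up w ≠ f.1 vb := by
          rw [← hx]
          exact fun hh => h1 (up_inj hh)
        have hne3 : up w ≠ f.1 va := by
          rw [← hgx]
          exact fun hh => h2 (up_inj hh)
        rw [insFun_up_other (xof f h) (rerPM f h).1 w h1 h2]
        exact up_rerFun_other f h w hne2 hne3
  · rw [insFun_va]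
    exact hgx
  · rw [insFun_vb]
    exact hx

lemma dec_surj : Function.Surjective (dec (m := m)) := by
  intro f
  by_cases h : f.1 vb = va
  · exact ⟨Sum.inl (resPM f h), dec_res f h⟩
  · exact ⟨Sum.inr (xof f h, rerPM f h), dec_rer f h⟩

end Rer2

lemma matchSum_step (k m : ℕ) : matchSum k (m+1) = (k + 2*m) * matchSum k m := by
  have hb : Function.Bijective (dec (m := m)) := ⟨dec_inj, dec_surj⟩
  have hsum := Fintype.sum_bijective (dec (m := m)) hb
    (fun s => k ^ Nat.card (matchGraph (m+1) (dec s).1).ConnectedComponent)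
    (fun f : PerfectMatching (m+1) => k ^ Nat.card (matchGraph (m+1) f.1).ConnectedComponent)
    (fun s => rfl)
  rw [matchSum, ← hsum, Fintype.sum_sum_type]
  have h1 : (∑ g : PerfectMatching m,
      k ^ Nat.card (matchGraph (m+1) (dec (Sum.inl g)).1).ConnectedComponent) =
      k * matchSum k m := by
    rw [matchSum, Finset.mul_sum]
    refine Finset.sum_congr rfl fun g _ => ?_
    show k ^ Nat.card (matchGraph (m+1) (extPerm g).1).ConnectedComponent = _
    rw [card_ext, pow_succ, mul_comm]
  have h2 : (∑ p : Fin (2*m) × PerfectMatching m,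
      k ^ Nat.card (matchGraph (m+1) (dec (Sum.inr p)).1).ConnectedComponent) =
      2*m * matchSum k m := by
    rw [Fintype.sum_prod_type]
    have h3 : ∀ x : Fin (2*m), (∑ g : PerfectMatching m,
        k ^ Nat.card (matchGraph (m+1) (dec (Sum.inr (x, g))).1).ConnectedComponent) =
        matchSum k m := by
      intro x
      rw [matchSum]
      refine Finset.sum_congr rfl fun g _ => ?_
      show k ^ Nat.card (matchGraph (m+1) (insPerm x g).1).ConnectedComponent = _
      rw [card_ins]
    calc (∑ x : Fin (2*m), ∑ g : PerfectMatching m,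
        k ^ Nat.card (matchGraph (m+1) (dec (Sum.inr (x, g))).1).ConnectedComponent)
        = ∑ _x : Fin (2*m), matchSum k m := Finset.sum_congr rfl fun x _ => h3 x
      _ = 2*m * matchSum k m := by
          rw [Finset.sum_const, Finset.card_univ, Fintype.card_fin, smul_eq_mul]
  rw [h1, h2, ← add_mul]

/-- For `n ≥ 2`, `f(k,n) = (k + 2n - 2) · f(k, n-1)`. -/
theorem matchSum_recurrence (k n : ℕ) (hn : 2 ≤ n) :
    matchSum k n = (k + 2 * n - 2) * matchSum k (n - 1) := by
  obtain ⟨m, rfl⟩ : ∃ m, n = m + 1 := ⟨n - 1, by omega⟩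
  have h1 : k + 2 * (m + 1) - 2 = k + 2 * m := by omega
  have h2 : m + 1 - 1 = m := rfl
  rw [h1, h2, matchSum_step]

end GBS
end

section
/- Let k ≥ 1 and n ≥ 0 be natural numbers. Then n! · ∑_{ℓ₁+ℓ₂+⋯+ℓ_k = n} ∏_{i=1}^{k} binom(2ℓᵢ, ℓᵢ) = 2^n · ∏_{j=0}^{n−1} (k + 2j), where the sum is over all tuples (ℓ₁,…,ℓ_k) of nonnegative integers summing to n. -/
open scoped BigOperators

namespace GBS

open PowerSeries

/-- The generating function of the central binomial coefficients, over `ℚ`. -/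
noncomputable def phiGBS : ℚ⟦X⟧ := PowerSeries.mk fun m => ((2 * m).choose m : ℚ)

lemma coeff_phiGBS (m : ℕ) : (coeff (R := ℚ) m) phiGBS = ((2 * m).choose m : ℚ) := coeff_mk _ _

lemma ode_phiGBS : (1 - 4 * X) * (d⁄dX ℚ phiGBS) = 2 * phiGBS := by
  have h : (1 - 4 * X) * (d⁄dX ℚ phiGBS) = (d⁄dX ℚ phiGBS) - (C (R := ℚ) 4) * (X * (d⁄dX ℚ phiGBS)) := by
    ring_nf
    rw [map_ofNat]
  rw [h]
  ext n
  rw [map_sub, coeff_C_mul]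
  have h2 : (coeff (R := ℚ) n) (2 * phiGBS) = 2 * (coeff (R := ℚ) n) phiGBS := by
    rw [show (2 : ℚ⟦X⟧) = C (R := ℚ) 2 by simp [map_ofNat], coeff_C_mul]
  rw [h2, coeff_phiGBS]
  cases n with
  | zero =>
    simp [coeff_derivative, coeff_phiGBS]
  | succ m =>
    rw [coeff_succ_X_mul, coeff_derivative, coeff_derivative, coeff_phiGBS, coeff_phiGBS]
    have key := Nat.succ_mul_centralBinom_succ (m + 1)
    simp only [Nat.centralBinom] at key
    have c1 : ((m + 1 + 1) * (2 * (m + 1 + 1)).choose (m + 1 + 1) : ℚ)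
        = 2 * (2 * (m + 1) + 1) * ((2 * (m + 1)).choose (m + 1) : ℚ) := by
      exact_mod_cast congrArg (Nat.cast : ℕ → ℚ) key
    push_cast at c1 ⊢
    nlinarith [c1]

lemma ode_pow_GBS (k : ℕ) (hk : 1 ≤ k) :
    (1 - 4 * X) * (d⁄dX ℚ (phiGBS ^ k)) = 2 * (k : ℚ⟦X⟧) * phiGBS ^ k := by
  rw [Derivation.leibniz_pow]
  simp only [smul_eq_mul, nsmul_eq_mul]
  have h1 : (1 - 4 * X) * ((k : ℚ⟦X⟧) * (phiGBS ^ (k - 1) * d⁄dX ℚ phiGBS))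
      = (k : ℚ⟦X⟧) * (phiGBS ^ (k - 1) * ((1 - 4 * X) * d⁄dX ℚ phiGBS)) := by ring
  rw [h1, ode_phiGBS,
    show phiGBS ^ (k - 1) * (2 * phiGBS) = 2 * (phiGBS ^ (k - 1) * phiGBS) by ring,
    pow_sub_one_mul (by omega) phiGBS]
  ring

lemma rec_coeff_GBS (k : ℕ) (hk : 1 ≤ k) (n : ℕ) :
    ((n : ℚ) + 1) * (coeff (R := ℚ) (n + 1)) (phiGBS ^ k)
      = (2 * k + 4 * n) * (coeff (R := ℚ) n) (phiGBS ^ k) := by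
  have hcoeff := congrArg (coeff (R := ℚ) n) (ode_pow_GBS k hk)
  have hL : (1 - 4 * X) * (d⁄dX ℚ (phiGBS ^ k))
      = (d⁄dX ℚ (phiGBS ^ k)) - (C (R := ℚ) 4) * (X * (d⁄dX ℚ (phiGBS ^ k))) := by
    ring_nf
    rw [map_ofNat]
  rw [hL, map_sub, coeff_C_mul] at hcoeff
  have hR : (coeff (R := ℚ) n) (2 * (k : ℚ⟦X⟧) * phiGBS ^ k) = 2 * k * (coeff (R := ℚ) n) (phiGBS ^ k) := by
    rw [show (2 : ℚ⟦X⟧) * (k : ℚ⟦X⟧) = ((2 * k : ℕ) : ℚ⟦X⟧) by push_cast; ring,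
      ← map_natCast (C (R := ℚ)) (2 * k), coeff_C_mul]
    push_cast; ring
  rw [hR] at hcoeff
  have hX : (coeff (R := ℚ) n) (X * d⁄dX ℚ (phiGBS ^ k)) = n * (coeff (R := ℚ) n) (phiGBS ^ k) := by
    cases n with
    | zero => simp
    | succ m => rw [coeff_succ_X_mul, coeff_derivative]; push_cast; ring
  rw [hX, coeff_derivative] at hcoeff
  -- arithmetic
  linarith

lemma main_rat_GBS (k : ℕ) (hk : 1 ≤ k) (n : ℕ) :
    (n.factorial : ℚ) * (coeff (R := ℚ) n) (phiGBS ^ k)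
      = 2 ^ n * ∏ j ∈ Finset.range n, ((k : ℚ) + 2 * j) := by
  induction n with
  | zero =>
    simp [coeff_zero_eq_constantCoeff, map_pow, phiGBS, constantCoeff_mk]
  | succ m ih =>
    have hrec := rec_coeff_GBS k hk m
    have : ((m + 1).factorial : ℚ) * (coeff (R := ℚ) (m + 1)) (phiGBS ^ k)
        = (m.factorial : ℚ) * (((m : ℚ) + 1) * (coeff (R := ℚ) (m + 1)) (phiGBS ^ k)) := by
      rw [Nat.factorial_succ]; push_cast; ring
    rw [this, hrec, Finset.prod_range_succ]
    linear_combination (2 * (k : ℚ) + 4 * m) * ih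

lemma sum_eq_coeff_GBS (k n : ℕ) :
    ((∑ ℓ ∈ Finset.Nat.antidiagonalTuple k n, ∏ i : Fin k, (2 * ℓ i).choose (ℓ i) : ℕ) : ℚ)
      = (coeff (R := ℚ) n) (phiGBS ^ k) := by
  rw [coeff_pow]
  push_cast
  refine Finset.sum_nbij' (i := fun ℓ : Fin k → ℕ => Finsupp.onFinset (Finset.range k)
      (fun m => if h : m < k then ℓ ⟨m, h⟩ else 0)
      (fun m hm => by rw [Finset.mem_range]; by_contra hc; simp [hc] at hm))
    (fun f => fun i : Fin k => f i.val) ?_ ?_ ?_ ?_ ?_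
  · intro ℓ hℓ
    rw [Finset.mem_finsuppAntidiag]
    refine ⟨?_, Finsupp.support_onFinset_subset⟩
    have : ∑ m ∈ Finset.range k, (if h : m < k then ℓ ⟨m, h⟩ else 0) = n := by
      rw [← Fin.sum_univ_eq_sum_range (fun m => if h : m < k then ℓ ⟨m, h⟩ else 0) k,
        ← Finset.Nat.mem_antidiagonalTuple.mp hℓ]
      exact Finset.sum_congr rfl (fun i _ => by simp)
    simpa [Finsupp.onFinset_apply, Finset.sum] using this
  · intro f hf
    rw [Finset.mem_finsuppAntidiag] at hf
    rw [Finset.Nat.mem_antidiagonalTuple, ← hf.1]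
    exact Fin.sum_univ_eq_sum_range (fun m => f m) k
  · intro ℓ hℓ
    funext i
    simp [Finsupp.onFinset_apply, i.isLt]
  · intro f hf
    rw [Finset.mem_finsuppAntidiag] at hf
    ext m
    simp only [Finsupp.onFinset_apply]
    split_ifs with h
    · rfl
    · by_contra hc
      have hmem : m ∈ f.support := by
        simp only [Finsupp.mem_support_iff]
        exact fun h0 => hc h0.symm
      have := hf.2 hmem
      rw [Finset.mem_range] at this
      omega
  · intro ℓ hℓ
    rw [← Fin.prod_univ_eq_prod_range
      (fun m => (coeff (R := ℚ) ((Finsupp.onFinset (Finset.range k)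
        (fun m => if h : m < k then ℓ ⟨m, h⟩ else 0)
        (fun m hm => by rw [Finset.mem_range]; by_contra hc; simp [hc] at hm)) m)) phiGBS) k]
    exact Finset.prod_congr rfl (fun i _ => by simp [coeff_phiGBS])

/-- For `k ≥ 1` and `n ≥ 0`:
`n! · ∑_{ℓ₁+⋯+ℓ_k = n} ∏_i binom(2ℓᵢ, ℓᵢ) = 2^n · ∏_{j=0}^{n−1} (k + 2j)`,
where the sum ranges over all `k`-tuples of nonnegative integers summing to `n`. -/
theorem factorial_mul_sum_centralBinom (k n : ℕ) (hk : 1 ≤ k) :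
    (n.factorial *
        ∑ ℓ ∈ Finset.Nat.antidiagonalTuple k n, ∏ i : Fin k, (2 * ℓ i).choose (ℓ i)) =
      2 ^ n * ∏ j ∈ Finset.range n, (k + 2 * j) := by
  have hQ : ((n.factorial *
        ∑ ℓ ∈ Finset.Nat.antidiagonalTuple k n, ∏ i : Fin k, (2 * ℓ i).choose (ℓ i) : ℕ) : ℚ)
      = ((2 ^ n * ∏ j ∈ Finset.range n, (k + 2 * j) : ℕ) : ℚ) := by
    push_cast
    rw [show ((∑ ℓ ∈ Finset.Nat.antidiagonalTuple k n,
          ∏ i : Fin k, ((2 * ℓ i).choose (ℓ i) : ℚ))) = (coeff (R := ℚ) n) (phiGBS ^ k) by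
        rw [← sum_eq_coeff_GBS k n]; push_cast; ring]
    exact main_rat_GBS k hk n
  exact_mod_cast hQ

end GBS
end
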